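/- arXiv:2509.10580 — 7 statements merged into one kernel-verified Lean document; each statement's English description precedes it below -/
import Mathlib

section
/- Let A be an n×n real matrix whose rows a_1,…,a_n have unit Euclidean norm, and suppose A is tie-free. Then β(A) ≤ 2 Σ_{i=1}^n √(W1[1_{S_i(A)}]), where 1_{S_i(A)} is the indicator function of the cell S_i(A). -/
open Finset

noncomputable section
open scoped Classical

/-- The sign `±1` associated to a Boolean. -/
def sgn (b : Bool) : ℝ := if b then 1 else -1

/-- The hypercube `{-1,1}^n` as a finite set of vectors in `ℝ^n`. -/
def cube (n : ℕ) : Finset (Fin n → ℝ) :=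
  (Finset.univ : Finset (Fin n → Bool)).image (fun ε i => sgn (ε i))

/-- `β(A) = 2^{-n} ∑_{x ∈ {-1,1}^n} ‖Ax‖_∞` (the `Pi` norm on `Fin n → ℝ` is the sup norm). -/
def badBeta {n : ℕ} (A : Matrix (Fin n) (Fin n) ℝ) : ℝ :=
  (2 ^ n : ℝ)⁻¹ * ∑ x ∈ cube n, ‖A.mulVec x‖

/-- The cell `S_i(A) = {x ∈ {-1,1}^n : ‖Ax‖_∞ = ⟨a_i, x⟩}`. -/
def cellS {n : ℕ} (A : Matrix (Fin n) (Fin n) ℝ) (i : Fin n) : Finset (Fin n → ℝ) :=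
  (cube n).filter (fun x => ‖A.mulVec x‖ = ∑ j, A i j * x j)

/-- `A` is tie-free: no two distinct rows attain the same absolute inner product with a
hypercube vertex. -/
def TieFree {n : ℕ} (A : Matrix (Fin n) (Fin n) ℝ) : Prop :=
  ∀ x ∈ cube n, ∀ i j : Fin n, i ≠ j →
    (∑ k, A i k * x k) ^ 2 ≠ (∑ k, A j k * x k) ^ 2

/-- Level-1 Fourier weight of `f : {-1,1}^n → ℝ`. -/
def W1 {n : ℕ} (f : (Fin n → ℝ) → ℝ) : ℝ :=
  ∑ i : Fin n, ((2 ^ n : ℝ)⁻¹ * ∑ x ∈ cube n, f x * x i) ^ 2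

lemma neg_mem_cube {n : ℕ} {x : Fin n → ℝ} (hx : x ∈ cube n) : -x ∈ cube n := by
  simp only [cube, Finset.mem_image] at hx ⊢
  obtain ⟨ε, -, rfl⟩ := hx
  refine ⟨fun i => !ε i, Finset.mem_univ _, ?_⟩
  funext i
  cases h : ε i <;> simp [sgn, h]

lemma exists_row {n : ℕ} (hn : 0 < n) (A : Matrix (Fin n) (Fin n) ℝ) (x : Fin n → ℝ) :
    ∃ i, ‖A.mulVec x‖ = |∑ j, A i j * x j| := by
  obtain ⟨i, -, hi⟩ := Finset.exists_max_image (Finset.univ : Finset (Fin n))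
    (fun i => |A.mulVec x i|) ⟨⟨0, hn⟩, Finset.mem_univ _⟩
  refine ⟨i, le_antisymm ?_ ?_⟩
  · rw [show (∑ j, A i j * x j) = A.mulVec x i from rfl]
    exact (pi_norm_le_iff_of_nonneg (abs_nonneg _)).2 fun j => by
      simpa [Real.norm_eq_abs] using hi j (Finset.mem_univ _)
  · exact (Real.norm_eq_abs (A.mulVec x i)).symm.trans_le (norm_le_pi_norm (A.mulVec x) i)

lemma cellS_subset {n : ℕ} (A : Matrix (Fin n) (Fin n) ℝ) (i : Fin n) :
    cellS A i ⊆ cube n := Finset.filter_subset _ _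

lemma filter_mem_cellS {n : ℕ} (A : Matrix (Fin n) (Fin n) ℝ) (i : Fin n) :
    (cube n).filter (fun x => x ∈ cellS A i) = cellS A i := by
  rw [Finset.filter_mem_eq_inter]
  exact Finset.inter_eq_right.2 (cellS_subset A i)

lemma cauchy_step {n : ℕ} (A : Matrix (Fin n) (Fin n) ℝ) (i : Fin n)
    (hrow : ∑ j, (A i j) ^ 2 = 1) :
    (2 ^ n : ℝ)⁻¹ * ∑ x ∈ cellS A i, ‖A.mulVec x‖ ≤
      Real.sqrt (W1 (fun x => if x ∈ cellS A i then (1 : ℝ) else 0)) := by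
  have h1 : ∑ x ∈ cellS A i, ‖A.mulVec x‖ = ∑ j, A i j * ∑ x ∈ cellS A i, x j :=
    calc ∑ x ∈ cellS A i, ‖A.mulVec x‖
        = ∑ x ∈ cellS A i, ∑ j, A i j * x j :=
          Finset.sum_congr rfl fun x hx => (Finset.mem_filter.1 hx).2
      _ = ∑ j, ∑ x ∈ cellS A i, A i j * x j := Finset.sum_comm
      _ = ∑ j, A i j * ∑ x ∈ cellS A i, x j :=
          Finset.sum_congr rfl fun j _ => (Finset.mul_sum _ _ _).symm
  have h2 : (2 ^ n : ℝ)⁻¹ * ∑ x ∈ cellS A i, ‖A.mulVec x‖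
      = ∑ j, A i j * ((2 ^ n : ℝ)⁻¹ * ∑ x ∈ cellS A i, x j) := by
    rw [h1, Finset.mul_sum]
    exact Finset.sum_congr rfl fun j _ => by ring
  have hW : W1 (fun x => if x ∈ cellS A i then (1 : ℝ) else 0)
      = ∑ j, ((2 ^ n : ℝ)⁻¹ * ∑ x ∈ cellS A i, x j) ^ 2 := by
    unfold W1
    refine Finset.sum_congr rfl fun j _ => ?_
    have : ∑ x ∈ cube n, (if x ∈ cellS A i then (1 : ℝ) else 0) * x j
        = ∑ x ∈ cellS A i, x j := by
      rw [Finset.sum_congr rfl (fun x _ => by rw [ite_mul, one_mul, zero_mul]),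
        ← Finset.sum_filter, filter_mem_cellS]
    rw [this]
  calc (2 ^ n : ℝ)⁻¹ * ∑ x ∈ cellS A i, ‖A.mulVec x‖
      = ∑ j, A i j * ((2 ^ n : ℝ)⁻¹ * ∑ x ∈ cellS A i, x j) := h2
    _ ≤ Real.sqrt (∑ j, (A i j) ^ 2)
        * Real.sqrt (∑ j, ((2 ^ n : ℝ)⁻¹ * ∑ x ∈ cellS A i, x j) ^ 2) :=
        Real.sum_mul_le_sqrt_mul_sqrt _ _ _
    _ = Real.sqrt (W1 (fun x => if x ∈ cellS A i then (1 : ℝ) else 0)) := by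
        rw [hrow, Real.sqrt_one, one_mul, hW]

set_option maxHeartbeats 1000000 in
theorem stmt0 {n : ℕ} (A : Matrix (Fin n) (Fin n) ℝ)
    (hrows : ∀ i, ∑ j, (A i j) ^ 2 = 1) (htie : TieFree A) :
    badBeta A ≤
      2 * ∑ i : Fin n, Real.sqrt (W1 (fun x => if x ∈ cellS A i then (1 : ℝ) else 0)) := by
  rcases Nat.eq_zero_or_pos n with h0 | hn
  · subst h0
    have hz : ∀ x ∈ cube 0, ‖A.mulVec x‖ = 0 := fun x _ => by
      rw [Subsingleton.elim (A.mulVec x) 0, norm_zero]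
    rw [badBeta, Finset.sum_eq_zero hz]
    simp
  have hg : ∀ x : Fin n → ℝ, (0:ℝ) ≤ ‖A.mulVec x‖ := fun x => norm_nonneg _
  have hneg : ∀ x ∈ (cube n).filter (fun x => ¬ ∃ i, x ∈ cellS A i),
      (-x) ∈ (cube n).filter (fun x => ∃ i, x ∈ cellS A i) := by
    intro x hx
    rw [Finset.mem_filter] at hx
    obtain ⟨hxc, hxnp⟩ := hx
    obtain ⟨i, hi⟩ := exists_row hn A x
    have hne : ‖A.mulVec x‖ ≠ ∑ j, A i j * x j := fun h =>
      hxnp ⟨i, Finset.mem_filter.2 ⟨hxc, h⟩⟩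
    have habs : |∑ j, A i j * x j| = -(∑ j, A i j * x j) := by
      rcases abs_choice (∑ j, A i j * x j) with h | h
      · exact absurd (hi.trans h) hne
      · exact h
    refine Finset.mem_filter.2 ⟨neg_mem_cube hxc, i, Finset.mem_filter.2
      ⟨neg_mem_cube hxc, ?_⟩⟩
    rw [Matrix.mulVec_neg, norm_neg, hi, habs]
    simp [mul_neg]
  have hsplit : ∑ x ∈ cube n, ‖A.mulVec x‖
      ≤ 2 * ∑ x ∈ (cube n).filter (fun x => ∃ i, x ∈ cellS A i), ‖A.mulVec x‖ := by
    have h1 : ∑ x ∈ (cube n).filter (fun x => ∃ i, x ∈ cellS A i), ‖A.mulVec x‖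
        + ∑ x ∈ (cube n).filter (fun x => ¬ ∃ i, x ∈ cellS A i), ‖A.mulVec x‖
        = ∑ x ∈ cube n, ‖A.mulVec x‖ :=
      Finset.sum_filter_add_sum_filter_not _ _ _
    have h2 : ∑ x ∈ (cube n).filter (fun x => ¬ ∃ i, x ∈ cellS A i), ‖A.mulVec x‖
        ≤ ∑ x ∈ (cube n).filter (fun x => ∃ i, x ∈ cellS A i), ‖A.mulVec x‖ :=
      calc ∑ x ∈ (cube n).filter (fun x => ¬ ∃ i, x ∈ cellS A i), ‖A.mulVec x‖
          = ∑ x ∈ (cube n).filter (fun x => ¬ ∃ i, x ∈ cellS A i), ‖A.mulVec (-x)‖ :=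
            Finset.sum_congr rfl fun x _ => by rw [Matrix.mulVec_neg, norm_neg]
        _ = ∑ y ∈ ((cube n).filter (fun x => ¬ ∃ i, x ∈ cellS A i)).image
              (fun x => -x), ‖A.mulVec y‖ :=
            by rw [Finset.sum_image fun a _ b _ h => neg_injective h]
        _ ≤ ∑ x ∈ (cube n).filter (fun x => ∃ i, x ∈ cellS A i), ‖A.mulVec x‖ := by
            refine Finset.sum_le_sum_of_subset_of_nonneg ?_ (fun x _ _ => hg x)
            intro y hy
            obtain ⟨x, hx, rfl⟩ := Finset.mem_image.1 hy
            exact hneg x hx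
    linarith
  have hclaim2 : ∑ x ∈ (cube n).filter (fun x => ∃ i, x ∈ cellS A i), ‖A.mulVec x‖
      ≤ ∑ i : Fin n, ∑ x ∈ cellS A i, ‖A.mulVec x‖ := by
    have hcell : ∀ i : Fin n, ∑ x ∈ cellS A i, ‖A.mulVec x‖
        = ∑ x ∈ cube n, if x ∈ cellS A i then ‖A.mulVec x‖ else 0 := fun i => by
      rw [← Finset.sum_filter, filter_mem_cellS]
    calc ∑ x ∈ (cube n).filter (fun x => ∃ i, x ∈ cellS A i), ‖A.mulVec x‖
        = ∑ x ∈ cube n, if (∃ i, x ∈ cellS A i) then ‖A.mulVec x‖ else 0 :=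
          Finset.sum_filter _ _
      _ ≤ ∑ x ∈ cube n, ∑ i : Fin n, if x ∈ cellS A i then ‖A.mulVec x‖ else 0 := by
          refine Finset.sum_le_sum fun x _ => ?_
          by_cases hxp : ∃ i, x ∈ cellS A i
          · obtain ⟨i, hi⟩ := hxp
            rw [if_pos ⟨i, hi⟩]
            calc ‖A.mulVec x‖ = if x ∈ cellS A i then ‖A.mulVec x‖ else 0 :=
                  (if_pos hi).symm
              _ ≤ ∑ j : Fin n, if x ∈ cellS A j then ‖A.mulVec x‖ else 0 :=
                  Finset.single_le_sum
                    (f := fun j => if x ∈ cellS A j then ‖A.mulVec x‖ else 0)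
                    (fun j _ => by split <;> simp [hg]) (Finset.mem_univ i)
          · rw [if_neg hxp]
            exact Finset.sum_nonneg fun j _ => by split <;> simp [hg]
      _ = ∑ i : Fin n, ∑ x ∈ cube n, if x ∈ cellS A i then ‖A.mulVec x‖ else 0 :=
          Finset.sum_comm
      _ = ∑ i : Fin n, ∑ x ∈ cellS A i, ‖A.mulVec x‖ :=
          Finset.sum_congr rfl fun i _ => (hcell i).symm
  have hcpos : (0:ℝ) ≤ (2 ^ n : ℝ)⁻¹ := by positivity
  calc badBeta A = (2 ^ n : ℝ)⁻¹ * ∑ x ∈ cube n, ‖A.mulVec x‖ := rfl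
    _ ≤ (2 ^ n : ℝ)⁻¹
        * (2 * ∑ x ∈ (cube n).filter (fun x => ∃ i, x ∈ cellS A i), ‖A.mulVec x‖) :=
        mul_le_mul_of_nonneg_left hsplit hcpos
    _ ≤ (2 ^ n : ℝ)⁻¹ * (2 * ∑ i : Fin n, ∑ x ∈ cellS A i, ‖A.mulVec x‖) := by
        refine mul_le_mul_of_nonneg_left ?_ hcpos
        linarith
    _ = 2 * ∑ i : Fin n, (2 ^ n : ℝ)⁻¹ * ∑ x ∈ cellS A i, ‖A.mulVec x‖ := by
        rw [mul_left_comm, Finset.mul_sum]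
    _ ≤ 2 * ∑ i : Fin n, Real.sqrt (W1 (fun x => if x ∈ cellS A i then (1 : ℝ) else 0)) := by
        refine mul_le_mul_of_nonneg_left (Finset.sum_le_sum fun i _ => ?_) (by norm_num)
        exact cauchy_step A i (hrows i)
end
end

section
/- Let A be an n×n real matrix whose rows a_1,…,a_n have unit Euclidean norm, and suppose A is tie-free. For each i let B_i = 2·Σ_{x ∈ S_i(A)} x ∈ ℝ^n. Then β(A) = 2^{-n} Σ_{i=1}^n ⟨a_i, B_i⟩, and consequently β(A) ≤ 2^{-n} Σ_{i=1}^n ‖B_i‖_2. -/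
open Finset

noncomputable section
open scoped Classical

lemma mulVec_apply' {n : ℕ} (A : Matrix (Fin n) (Fin n) ℝ) (x : Fin n → ℝ) (i : Fin n) :
    A.mulVec x i = ∑ j, A i j * x j := by
  simp [Matrix.mulVec, dotProduct]

/-- Real-valued count of cells containing `x`. -/
def cR {n : ℕ} (A : Matrix (Fin n) (Fin n) ℝ) (x : Fin n → ℝ) : ℝ :=
  ∑ i : Fin n, if x ∈ cellS A i then (1:ℝ) else 0

/-- Among `x` and `-x`, exactly one lies in exactly one cell (when `‖Ax‖ ≠ 0`). -/
lemma cell_count {n : ℕ} (A : Matrix (Fin n) (Fin n) ℝ) (htie : TieFree A)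
    {x : Fin n → ℝ} (hx : x ∈ cube n) (hnz : ‖A.mulVec x‖ ≠ 0) :
    (∑ i : Fin n, if x ∈ cellS A i then (1:ℝ) else 0) +
      (∑ i : Fin n, if -x ∈ cellS A i then (1:ℝ) else 0) = 1 := by
  set m := A.mulVec x with hm
  have hMpos : 0 < ‖m‖ := lt_of_le_of_ne (norm_nonneg m) (Ne.symm hnz)
  have hmne : m ≠ 0 := norm_ne_zero_iff.mp hnz
  obtain ⟨j, hj⟩ := Function.ne_iff.mp hmne
  haveI : Nonempty (Fin n) := ⟨j⟩
  obtain ⟨i₀, -, hmax⟩ := Finset.exists_max_image Finset.univ (fun i => |m i|) univ_nonempty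
  have hMi : ‖m‖ = |m i₀| := by
    refine le_antisymm ?_ ?_
    · exact (pi_norm_le_iff_of_nonneg (abs_nonneg _)).mpr fun i => by
        simpa [Real.norm_eq_abs] using hmax i (mem_univ i)
    · simpa [Real.norm_eq_abs] using norm_le_pi_norm m i₀
  have hlt : ∀ i, i ≠ i₀ → |m i| < ‖m‖ := by
    intro i hi
    rw [hMi]
    refine lt_of_le_of_ne (hmax i (mem_univ i)) (fun h => ?_)
    have : (∑ k, A i k * x k) ^ 2 = (∑ k, A i₀ k * x k) ^ 2 := by
      rw [← mulVec_apply' A x i, ← mulVec_apply' A x i₀, ← hm, ← sq_abs (m i),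
        ← sq_abs (m i₀), h]
    exact htie x hx i i₀ hi this
  have hmemx : ∀ i, x ∈ cellS A i ↔ ‖m‖ = m i := by
    intro i
    simp only [cellS, Finset.mem_filter, hx, true_and, ← hm, ← mulVec_apply']
  have hmemnx : ∀ i, -x ∈ cellS A i ↔ ‖m‖ = -(m i) := by
    intro i
    have h1 : A.mulVec (-x) = -m := by rw [Matrix.mulVec_neg, hm]
    have h2 : (∑ k, A i k * (-x) k) = -(m i) := by
      rw [← mulVec_apply' A (-x) i, h1]; simp
    simp only [cellS, Finset.mem_filter, neg_mem_cube hx, true_and, h1, h2, norm_neg]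
  have hsumx : (∑ i : Fin n, if x ∈ cellS A i then (1:ℝ) else 0) =
      if ‖m‖ = m i₀ then (1:ℝ) else 0 := by
    rw [Finset.sum_eq_single i₀]
    · simp only [hmemx i₀]
    · intro i _ hi
      have : ¬ (‖m‖ = m i) := by
        intro h
        have := hlt i hi
        have := le_abs_self (m i)
        linarith
      simp [hmemx i, this]
    · intro h; exact absurd (mem_univ i₀) h
  have hsumnx : (∑ i : Fin n, if -x ∈ cellS A i then (1:ℝ) else 0) =
      if ‖m‖ = -(m i₀) then (1:ℝ) else 0 := by
    rw [Finset.sum_eq_single i₀]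
    · simp only [hmemnx i₀]
    · intro i _ hi
      have : ¬ (‖m‖ = -(m i)) := by
        intro h
        have := hlt i hi
        have := neg_abs_le (m i)
        linarith
      simp [hmemnx i, this]
    · intro h; exact absurd (mem_univ i₀) h
  rw [hsumx, hsumnx]
  rcases abs_eq (le_of_lt hMpos) |>.mp hMi.symm with h | h
  · have h2 : ¬ (‖m‖ = -(m i₀)) := by intro h'; rw [h] at h'; linarith
    rw [if_pos h.symm, if_neg h2]
    norm_num
  · have h1 : ¬ (‖m‖ = m i₀) := by intro h'; rw [h] at h'; linarith
    have h2 : ‖m‖ = -(m i₀) := by rw [h]; ring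
    rw [if_neg h1, if_pos h2]
    norm_num

theorem stmt2 {n : ℕ} (A : Matrix (Fin n) (Fin n) ℝ)
    (hrows : ∀ i, ∑ j, (A i j) ^ 2 = 1) (htie : TieFree A)
    (B : Fin n → Fin n → ℝ)
    (hB : ∀ i j, B i j = 2 * ∑ x ∈ cellS A i, x j) :
    badBeta A = (2 ^ n : ℝ)⁻¹ * ∑ i : Fin n, ∑ j : Fin n, A i j * B i j ∧
    badBeta A ≤ (2 ^ n : ℝ)⁻¹ * ∑ i : Fin n, Real.sqrt (∑ j : Fin n, (B i j) ^ 2) := by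
  have step1 : ∀ i, (∑ j, A i j * B i j) = 2 * ∑ x ∈ cellS A i, ‖A.mulVec x‖ := by
    intro i
    calc (∑ j, A i j * B i j)
        = ∑ j, ∑ x ∈ cellS A i, 2 * (A i j * x j) := by
          refine Finset.sum_congr rfl fun j _ => ?_
          rw [hB, Finset.mul_sum, Finset.mul_sum]
          exact Finset.sum_congr rfl fun x _ => by ring
      _ = ∑ x ∈ cellS A i, ∑ j, 2 * (A i j * x j) := Finset.sum_comm
      _ = 2 * ∑ x ∈ cellS A i, ∑ j, A i j * x j := by
          rw [Finset.mul_sum]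
          exact Finset.sum_congr rfl fun x _ => by rw [Finset.mul_sum]
      _ = 2 * ∑ x ∈ cellS A i, ‖A.mulVec x‖ := by
          congr 1
          exact Finset.sum_congr rfl fun x hxc => ((Finset.mem_filter.mp hxc).2).symm
  have step2 : (∑ i : Fin n, 2 * ∑ x ∈ cellS A i, ‖A.mulVec x‖) =
      ∑ x ∈ cube n, 2 * cR A x * ‖A.mulVec x‖ := by
    have h1 : ∀ i : Fin n, (∑ x ∈ cellS A i, ‖A.mulVec x‖) =
        ∑ x ∈ cube n, (if x ∈ cellS A i then ‖A.mulVec x‖ else 0) := by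
      intro i
      unfold cellS
      rw [Finset.sum_filter]
      apply Finset.sum_congr rfl
      intro x hxc
      congr 1
      simp [cellS, Finset.mem_filter, hxc]
    calc (∑ i : Fin n, 2 * ∑ x ∈ cellS A i, ‖A.mulVec x‖)
        = ∑ i : Fin n, ∑ x ∈ cube n, 2 * (if x ∈ cellS A i then ‖A.mulVec x‖ else 0) := by
          simp only [h1, Finset.mul_sum]
      _ = ∑ x ∈ cube n, ∑ i : Fin n, 2 * (if x ∈ cellS A i then ‖A.mulVec x‖ else 0) :=
          Finset.sum_comm
      _ = ∑ x ∈ cube n, 2 * cR A x * ‖A.mulVec x‖ := by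
          apply Finset.sum_congr rfl
          intro x _
          unfold cR
          simp only [Finset.sum_mul, Finset.mul_sum, ite_mul, one_mul, zero_mul]
          apply Finset.sum_congr rfl
          intro i _
          split <;> ring
  have step3 : (∑ x ∈ cube n, ‖A.mulVec x‖) = ∑ x ∈ cube n, 2 * cR A x * ‖A.mulVec x‖ := by
    have hz : (∑ x ∈ cube n, (‖A.mulVec x‖ - 2 * cR A x * ‖A.mulVec x‖)) = 0 := by
      apply Finset.sum_involution (g := fun a _ => -a)
      · intro a ha
        have hnm : ‖A.mulVec (-a)‖ = ‖A.mulVec a‖ := by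
          rw [Matrix.mulVec_neg, norm_neg]
        by_cases hza : ‖A.mulVec a‖ = 0
        · rw [hnm, hza]; ring
        · have hkey : cR A a + cR A (-a) = 1 := cell_count A htie ha hza
          rw [hnm]
          linear_combination (-2 * ‖A.mulVec a‖) * hkey
      · intro a ha hfa
        intro h
        apply hfa
        have ha0 : a = 0 := by
          funext j
          have h2 := congrFun h j
          simp only [Pi.neg_apply, Pi.zero_apply] at h2 ⊢
          linarith
        rw [ha0]
        simp [Matrix.mulVec_zero]
      · intro a ha; exact neg_neg a
      · intro a ha; exact neg_mem_cube ha
    rw [Finset.sum_sub_distrib] at hz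
    linarith
  have key1 : badBeta A = (2 ^ n : ℝ)⁻¹ * ∑ i : Fin n, ∑ j : Fin n, A i j * B i j := by
    unfold badBeta
    congr 1
    rw [step3, ← step2]
    exact (Finset.sum_congr rfl fun i _ => (step1 i)).symm
  refine ⟨key1, ?_⟩
  rw [key1]
  apply mul_le_mul_of_nonneg_left _ (by positivity)
  apply Finset.sum_le_sum
  intro i _
  have hcs := Finset.sum_mul_sq_le_sq_mul_sq Finset.univ (fun j => A i j) (fun j => B i j)
  rw [hrows i, one_mul] at hcs
  calc (∑ j, A i j * B i j) ≤ |∑ j, A i j * B i j| := le_abs_self _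
    _ = Real.sqrt ((∑ j, A i j * B i j) ^ 2) := (Real.sqrt_sq_eq_abs _).symm
    _ ≤ Real.sqrt (∑ j, (B i j) ^ 2) := Real.sqrt_le_sqrt hcs
end
end

section
/- Let n ≥ 1 and let α_1, …, α_n be nonnegative reals with α_i ≤ 1/2 for all i and Σ_{i=1}^n α_i = 1/2. Then Σ_{i=1}^n α_i·√(2·log(1/α_i)) ≤ (1/2)·√(2·log(2n)) (with the convention 0·√(2·log(1/0)) = 0), and equality holds if and only if α_i = 1/(2n) for every i. -/
set_option maxHeartbeats 1000000

open Finset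

/-- For `α : Fin n → ℝ` nonnegative, each `≤ 1/2`, summing to `1/2`, we have
`∑ αᵢ √(2 log(1/αᵢ)) ≤ (1/2)√(2 log(2n))`, with equality iff all `αᵢ = 1/(2n)`.
(At `αᵢ = 0` the term is `0`, matching the convention, since in `ℝ` we have
`1/0 = 0`, `log 0 = 0`, `√0 = 0`.) -/
theorem stmt5 {n : ℕ} (hn : 1 ≤ n) (α : Fin n → ℝ)
    (h0 : ∀ i, 0 ≤ α i) (h2 : ∀ i, α i ≤ 1 / 2) (hsum : ∑ i, α i = 1 / 2) :
    (∑ i, α i * Real.sqrt (2 * Real.log (1 / α i)) ≤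
        (1 / 2) * Real.sqrt (2 * Real.log (2 * n))) ∧
    ((∑ i, α i * Real.sqrt (2 * Real.log (1 / α i)) =
        (1 / 2) * Real.sqrt (2 * Real.log (2 * n))) ↔ ∀ i, α i = 1 / (2 * n)) := by
  have hn' : (1:ℝ) ≤ (n:ℝ) := by exact_mod_cast hn
  have hnpos : (0:ℝ) < 2 * n := by linarith
  have hlog2n : 0 ≤ Real.log (2*(n:ℝ)) := Real.log_nonneg (by linarith)
  have hLnn : ∀ i, 0 ≤ Real.log (1 / α i) := by
    intro i
    rcases eq_or_lt_of_le (h0 i) with h|h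
    · simp [← h]
    · exact Real.log_nonneg (by rw [le_div_iff₀ h]; linarith [h2 i])
  -- termwise entropy bound
  have hterm : ∀ i, α i * Real.log (1 / α i)
      ≤ α i * Real.log (2*(n:ℝ)) + (1/(2*(n:ℝ)) - α i) := by
    intro i
    rcases eq_or_lt_of_le (h0 i) with h|h
    · rw [← h]; simp
    · have hx : 0 < 1 / (2*(n:ℝ) * α i) := by positivity
      have hlog := Real.log_le_sub_one_of_pos hx
      have hsplit : Real.log (1 / α i)
          = Real.log (2*(n:ℝ)) + Real.log (1/(2*(n:ℝ)*α i)) := by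
        rw [← Real.log_mul (by positivity) (by positivity)]
        congr 1; field_simp
      rw [hsplit]
      have h1 : α i * Real.log (1/(2*(n:ℝ)*α i)) ≤ α i * (1/(2*(n:ℝ)*α i) - 1) :=
        mul_le_mul_of_nonneg_left hlog (le_of_lt h)
      have heq : α i * (1/(2*(n:ℝ)*α i) - 1) = 1/(2*(n:ℝ)) - α i := by
        field_simp
      nlinarith
  have hgsum : ∑ i, (α i * Real.log (2*(n:ℝ)) + (1/(2*(n:ℝ)) - α i))
      = (1/2) * Real.log (2*(n:ℝ)) := by
    rw [Finset.sum_add_distrib, ← Finset.sum_mul, hsum, Finset.sum_sub_distrib, hsum,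
      Finset.sum_const, Finset.card_univ, Fintype.card_fin, nsmul_eq_mul]
    have hne : (n:ℝ) ≠ 0 := by linarith
    field_simp; ring
  have hT : ∑ i, α i * Real.log (1 / α i) ≤ (1/2) * Real.log (2*(n:ℝ)) := by
    rw [← hgsum]; exact Finset.sum_le_sum (fun i _ => hterm i)
  -- Cauchy-Schwarz
  have key := Finset.sum_mul_sq_le_sq_mul_sq Finset.univ
      (fun i => Real.sqrt (α i))
      (fun i => Real.sqrt (α i) * Real.sqrt (2 * Real.log (1/α i)))
  have e1 : ∀ i, Real.sqrt (α i) * (Real.sqrt (α i) * Real.sqrt (2 * Real.log (1/α i)))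
      = α i * Real.sqrt (2 * Real.log (1/α i)) := fun i => by
    rw [← mul_assoc, Real.mul_self_sqrt (h0 i)]
  have e2 : ∀ i, (Real.sqrt (α i))^2 = α i := fun i => Real.sq_sqrt (h0 i)
  have e3 : ∀ i, (Real.sqrt (α i) * Real.sqrt (2 * Real.log (1/α i)))^2
      = α i * (2 * Real.log (1/α i)) := fun i => by
    rw [mul_pow, Real.sq_sqrt (h0 i), Real.sq_sqrt (by have := hLnn i; positivity)]
  simp only [e1, e2, e3] at key
  rw [hsum] at key
  have hsum2 : ∑ i, α i * (2 * Real.log (1/α i)) = 2 * ∑ i, α i * Real.log (1/α i) := by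
    rw [Finset.mul_sum]; congr 1; ext i; ring
  rw [hsum2] at key
  -- key : (∑ α √(2L))^2 ≤ 1/2 * (2 * ∑ α L)
  have hS2 : (∑ i, α i * Real.sqrt (2 * Real.log (1/α i)))^2
      ≤ (1/2) * Real.log (2*(n:ℝ)) := by nlinarith
  have hSnn : 0 ≤ ∑ i, α i * Real.sqrt (2 * Real.log (1/α i)) :=
    Finset.sum_nonneg (fun i _ => mul_nonneg (h0 i) (Real.sqrt_nonneg _))
  have hRHSsq : ((1/2) * Real.sqrt (2 * Real.log (2*(n:ℝ))))^2
      = (1/2) * Real.log (2*(n:ℝ)) := by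
    rw [mul_pow, Real.sq_sqrt (by positivity)]; ring
  have hRHSnn : 0 ≤ (1/2) * Real.sqrt (2 * Real.log (2*(n:ℝ))) := by positivity
  have hineq : ∑ i, α i * Real.sqrt (2 * Real.log (1/α i))
      ≤ (1/2) * Real.sqrt (2 * Real.log (2*(n:ℝ))) := by nlinarith
  refine ⟨hineq, ?_, ?_⟩
  · -- equality → uniform
    intro hEq
    have hTeq : ∑ i, α i * Real.log (1 / α i) = (1/2) * Real.log (2*(n:ℝ)) := by
      have : ((1/2) * Real.sqrt (2 * Real.log (2*(n:ℝ))))^2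
          ≤ (1/2) * (2 * ∑ i, α i * Real.log (1/α i)) := by rw [← hEq]; exact key
      rw [hRHSsq] at this
      linarith
    have hall := (Finset.sum_eq_sum_iff_of_le (fun i (_ : i ∈ Finset.univ) => hterm i)).1
      (by rw [hgsum]; exact hTeq)
    intro i
    have hi := hall i (Finset.mem_univ i)
    rcases eq_or_lt_of_le (h0 i) with h|h
    · exfalso
      rw [← h] at hi
      simp at hi
      have : (0:ℝ) < 1/(2*(n:ℝ)) := by positivity
      linarith
    · have hx : 0 < 1 / (2*(n:ℝ) * α i) := by positivity
      have hsplit : Real.log (1 / α i)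
          = Real.log (2*(n:ℝ)) + Real.log (1/(2*(n:ℝ)*α i)) := by
        rw [← Real.log_mul (by positivity) (by positivity)]
        congr 1; field_simp
      rw [hsplit] at hi
      have heq : α i * (1/(2*(n:ℝ)*α i) - 1) = 1/(2*(n:ℝ)) - α i := by
        field_simp
      have hlogeq : α i * Real.log (1/(2*(n:ℝ)*α i)) = α i * (1/(2*(n:ℝ)*α i) - 1) := by
        rw [heq]; nlinarith [hi]
      have hlogeq' : Real.log (1/(2*(n:ℝ)*α i)) = 1/(2*(n:ℝ)*α i) - 1 :=
        mul_left_cancel₀ (ne_of_gt h) hlogeq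
      have hx1 : 1/(2*(n:ℝ)*α i) = 1 := by
        by_contra hx1
        have := Real.log_lt_sub_one_of_pos hx hx1
        linarith
      rw [div_eq_one_iff_eq (by positivity : 2*(n:ℝ)*α i ≠ 0)] at hx1
      rw [eq_div_iff (ne_of_gt hnpos)]
      linarith
  · -- uniform → equality
    intro hu
    have hc : ∀ i, α i * Real.sqrt (2 * Real.log (1 / α i))
        = (1/(2*(n:ℝ))) * Real.sqrt (2 * Real.log (2*(n:ℝ))) := by
      intro i; rw [hu i, one_div_one_div]
    rw [Finset.sum_congr rfl (fun i _ => hc i), Finset.sum_const, Finset.card_univ,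
      Fintype.card_fin, nsmul_eq_mul]
    have hh : (n:ℝ) * (1/(2*(n:ℝ))) = 1/2 := by
      field_simp
    rw [← mul_assoc, hh]
end

section
/- There exists an absolute constant c > 0 such that for every n ≥ 2 and every tie-free n×n real matrix A with unit Euclidean norm rows, writing α_i = |S_i(A)|/2^n, one has Σ_{i=1}^n (α_i − 1/(2n))² ≤ n^{-1/2} + c·(√(2·log(2n)) − β(A)). -/
open Finset

noncomputable section
open scoped Classical

lemma sgn_inj : Function.Injective sgn := by
  intro a b h
  cases a <;> cases b <;> simp [sgn] at h ⊢ <;> norm_num at h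

lemma mem_cube_iff {n : ℕ} {x : Fin n → ℝ} :
    x ∈ cube n ↔ ∀ i, x i = 1 ∨ x i = -1 := by
  constructor
  · rintro hx i
    simp only [cube, mem_image] at hx
    obtain ⟨ε, -, rfl⟩ := hx
    by_cases h : ε i <;> simp [sgn, h]
  · intro h
    simp only [cube, mem_image]
    refine ⟨fun i => x i = 1, mem_univ _, ?_⟩
    funext i
    rcases h i with h1 | h1 <;> simp [sgn, h1, show ((-1:ℝ) = 1 ↔ False) by norm_num]

lemma cube_card (n : ℕ) : (cube n).card = 2 ^ n := by
  rw [cube, Finset.card_image_of_injective _ (fun ε ε' h => ?_)]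
  · simp
  · funext i
    exact sgn_inj (congrFun h i)

lemma exists_attain {n : ℕ} (hn : 1 ≤ n) (v : Fin n → ℝ) :
    ∃ i, ‖v‖ = |v i| := by
  haveI : NeZero n := ⟨by omega⟩
  obtain ⟨i, -, hi⟩ := Finset.exists_max_image (univ : Finset (Fin n)) (fun i => |v i|)
    ⟨0, mem_univ 0⟩
  refine ⟨i, le_antisymm ?_ ?_⟩
  · refine pi_norm_le_iff_of_nonneg (abs_nonneg _) |>.2 fun j => ?_
    simpa [Real.norm_eq_abs] using hi j (mem_univ j)
  · simpa [Real.norm_eq_abs] using norm_le_pi_norm v i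


lemma mgf_bound {n : ℕ} (θ : Fin n → ℝ) (hθ : ∑ j, θ j ^ 2 = 1) (l : ℝ) :
    ∑ ε : Fin n → Bool, Real.exp (l * ∑ j, θ j * (if ε j then (1:ℝ) else -1)) ≤
      2 ^ n * Real.exp (l ^ 2 / 2) := by
  have step1 : ∑ ε : Fin n → Bool, Real.exp (l * ∑ j, θ j * (if ε j then (1:ℝ) else -1))
      = ∑ ε : Fin n → Bool, ∏ j, Real.exp (l * θ j * (if ε j then (1:ℝ) else -1)) := by
    refine Finset.sum_congr rfl fun ε _ => ?_
    rw [← Real.exp_sum]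
    congr 1
    rw [Finset.mul_sum]
    exact Finset.sum_congr rfl fun j _ => by ring
  have step2 : ∑ ε : Fin n → Bool, ∏ j, Real.exp (l * θ j * (if ε j then (1:ℝ) else -1))
      = ∏ j, (Real.exp (l * θ j) + Real.exp (-(l * θ j))) := by
    rw [← Fintype.prod_sum (fun j (b : Bool) => Real.exp (l * θ j * (if b then (1:ℝ) else -1)))]
    refine Finset.prod_congr rfl fun j _ => ?_
    rw [Fintype.sum_bool]
    norm_num
  rw [step1, step2]
  have step3 : ∀ j : Fin n, Real.exp (l * θ j) + Real.exp (-(l * θ j))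
      ≤ 2 * Real.exp ((l * θ j) ^ 2 / 2) := by
    intro j
    have := Real.cosh_le_exp_half_sq (l * θ j)
    rw [Real.cosh_eq] at this
    linarith
  calc ∏ j, (Real.exp (l * θ j) + Real.exp (-(l * θ j)))
      ≤ ∏ j, 2 * Real.exp ((l * θ j) ^ 2 / 2) := by
        refine Finset.prod_le_prod (fun j _ => by positivity) fun j _ => step3 j
    _ = 2 ^ n * Real.exp (l ^ 2 / 2) := by
        rw [Finset.prod_mul_distrib, Finset.prod_const, ← Real.exp_sum]
        congr 2
        · simp
        · have : ∑ i : Fin n, (l * θ i) ^ 2 = l ^ 2 := by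
            rw [← mul_one (l^2), ← hθ, Finset.mul_sum]
            exact Finset.sum_congr rfl fun j _ => by ring
          rw [← Finset.sum_div, this]

lemma sum_cube_eq {n : ℕ} (f : (Fin n → ℝ) → ℝ) :
    ∑ x ∈ cube n, f x = ∑ ε : Fin n → Bool, f (fun i => sgn (ε i)) := by
  rw [cube, Finset.sum_image]
  intro ε _ ε' _ h
  funext i
  exact sgn_inj (congrFun h i)

lemma cell_bound {n : ℕ} (θ : Fin n → ℝ) (hθ : ∑ j, θ j ^ 2 = 1)
    (S : Finset (Fin n → ℝ)) (hS : S ⊆ cube n) (hpos : 0 < S.card)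
    (hhalf : ((S.card : ℝ) / 2 ^ n) ≤ 1 / 2) :
    ∑ x ∈ S, ∑ j, θ j * x j ≤
      (S.card : ℝ) * Real.sqrt (-2 * Real.log ((S.card : ℝ) / 2 ^ n)) := by
  set α : ℝ := (S.card : ℝ) / 2 ^ n with hα
  have hα0 : 0 < α := by positivity
  have hα1 : α < 1 := lt_of_le_of_lt hhalf (by norm_num)
  have hlog : Real.log α < 0 := Real.log_neg hα0 hα1
  set l : ℝ := Real.sqrt (-2 * Real.log α) with hl
  have hl0 : 0 < l := Real.sqrt_pos.2 (by linarith)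
  have hl2 : l ^ 2 = -2 * Real.log α := Real.sq_sqrt (by linarith)
  -- pointwise Young
  have point : ∀ x ∈ S,
      1 + (l * (∑ j, θ j * x j) - l ^ 2 / 2 + Real.log α)
        ≤ α * Real.exp (l * (∑ j, θ j * x j) - l ^ 2 / 2) := by
    intro x _
    have h1 := Real.add_one_le_exp (l * (∑ j, θ j * x j) - l ^ 2 / 2 + Real.log α)
    rw [Real.exp_add, Real.exp_log hα0] at h1
    calc 1 + (l * (∑ j, θ j * x j) - l ^ 2 / 2 + Real.log α)
        = (l * (∑ j, θ j * x j) - l ^ 2 / 2 + Real.log α) + 1 := by ring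
      _ ≤ Real.exp (l * (∑ j, θ j * x j) - l ^ 2 / 2) * α := h1
      _ = α * Real.exp (l * (∑ j, θ j * x j) - l ^ 2 / 2) := by ring
  have sum1 : ∑ x ∈ S, (1 + (l * (∑ j, θ j * x j) - l ^ 2 / 2 + Real.log α))
      ≤ α * ∑ x ∈ cube n, Real.exp (l * (∑ j, θ j * x j) - l ^ 2 / 2) := by
    calc ∑ x ∈ S, (1 + (l * (∑ j, θ j * x j) - l ^ 2 / 2 + Real.log α))
        ≤ ∑ x ∈ S, α * Real.exp (l * (∑ j, θ j * x j) - l ^ 2 / 2) :=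
          Finset.sum_le_sum point
      _ ≤ ∑ x ∈ cube n, α * Real.exp (l * (∑ j, θ j * x j) - l ^ 2 / 2) :=
          Finset.sum_le_sum_of_subset_of_nonneg hS (fun x _ _ => by positivity)
      _ = α * ∑ x ∈ cube n, Real.exp (l * (∑ j, θ j * x j) - l ^ 2 / 2) := by
          rw [Finset.mul_sum]
  have mgf : ∑ x ∈ cube n, Real.exp (l * (∑ j, θ j * x j) - l ^ 2 / 2)
      ≤ 2 ^ n := by
    have : ∑ x ∈ cube n, Real.exp (l * (∑ j, θ j * x j) - l ^ 2 / 2)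
        = (∑ ε : Fin n → Bool, Real.exp (l * ∑ j, θ j * (if ε j then (1:ℝ) else -1)))
            * Real.exp (- (l ^ 2 / 2)) := by
      rw [sum_cube_eq (fun x => Real.exp (l * (∑ j, θ j * x j) - l ^ 2 / 2)),
        Finset.sum_mul]
      refine Finset.sum_congr rfl fun ε _ => ?_
      rw [← Real.exp_add]
      congr 1
    rw [this]
    have h2 := mgf_bound θ hθ l
    calc (∑ ε : Fin n → Bool, Real.exp (l * ∑ j, θ j * (if ε j then (1:ℝ) else -1)))
          * Real.exp (-(l ^ 2 / 2))
        ≤ 2 ^ n * Real.exp (l ^ 2 / 2) * Real.exp (-(l ^ 2 / 2)) := by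
          exact mul_le_mul_of_nonneg_right h2 (Real.exp_nonneg _)
      _ = 2 ^ n := by rw [mul_assoc, ← Real.exp_add]; simp
  have sum2 : (S.card : ℝ) + (l * ∑ x ∈ S, ∑ j, θ j * x j
      - (S.card : ℝ) * (l ^ 2 / 2) + (S.card : ℝ) * Real.log α) ≤ (S.card : ℝ) := by
    have e1 : ∑ x ∈ S, (1 + (l * (∑ j, θ j * x j) - l ^ 2 / 2 + Real.log α))
        = (S.card : ℝ) + (l * ∑ x ∈ S, ∑ j, θ j * x j
            - (S.card : ℝ) * (l ^ 2 / 2) + (S.card : ℝ) * Real.log α) := by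
      rw [Finset.sum_add_distrib, Finset.sum_const, nsmul_eq_mul, mul_one]
      congr 1
      rw [Finset.sum_add_distrib, Finset.sum_sub_distrib, Finset.sum_const,
        Finset.sum_const, ← Finset.mul_sum, nsmul_eq_mul, nsmul_eq_mul]
    have e2 : α * (2:ℝ) ^ n = (S.card : ℝ) := by
      rw [hα]; field_simp
    calc (S.card : ℝ) + (l * ∑ x ∈ S, ∑ j, θ j * x j
        - (S.card : ℝ) * (l ^ 2 / 2) + (S.card : ℝ) * Real.log α)
        = ∑ x ∈ S, (1 + (l * (∑ j, θ j * x j) - l ^ 2 / 2 + Real.log α)) := e1.symm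
      _ ≤ α * ∑ x ∈ cube n, Real.exp (l * (∑ j, θ j * x j) - l ^ 2 / 2) := sum1
      _ ≤ α * 2 ^ n := by
          exact mul_le_mul_of_nonneg_left mgf (le_of_lt hα0)
      _ = (S.card : ℝ) := e2
  -- conclude
  have key : l * ∑ x ∈ S, ∑ j, θ j * x j ≤ (S.card : ℝ) * l ^ 2 := by
    nlinarith [sum2, hl2]
  calc ∑ x ∈ S, ∑ j, θ j * x j = (l * ∑ x ∈ S, ∑ j, θ j * x j) / l := by
        field_simp
    _ ≤ ((S.card : ℝ) * l ^ 2) / l := by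
        exact div_le_div_of_nonneg_right key hl0.le
    _ = (S.card : ℝ) * l := by
        field_simp
section part
variable {n : ℕ} (A : Matrix (Fin n) (Fin n) ℝ)

def Ucells : Finset (Fin n → ℝ) :=
  (cube n).filter (fun x => ∃ i, ‖A.mulVec x‖ = ∑ j, A i j * x j)

variable {A}

lemma norm_pos (hn : 2 ≤ n) (hT : TieFree A) {x : Fin n → ℝ} (hx : x ∈ cube n) :
    0 < ‖A.mulVec x‖ := by
  rcases eq_or_lt_of_le (norm_nonneg (A.mulVec x)) with h | h
  · exfalso
    have hz : A.mulVec x = 0 := by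
      rw [← norm_eq_zero]; exact h.symm
    have h0 : (⟨0, by omega⟩ : Fin n) ≠ ⟨1, by omega⟩ := by
      simp [Fin.ext_iff]
    refine hT x hx _ _ h0 ?_
    have e0 : ∑ k, A ⟨0, by omega⟩ k * x k = A.mulVec x ⟨0, by omega⟩ := rfl
    have e1 : ∑ k, A ⟨1, by omega⟩ k * x k = A.mulVec x ⟨1, by omega⟩ := rfl
    rw [e0, e1, hz]
    simp
  · exact h

lemma not_both (hn : 2 ≤ n) (hT : TieFree A) {x : Fin n → ℝ} (hx : x ∈ cube n) :
    ¬(x ∈ Ucells A ∧ -x ∈ Ucells A) := by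
  rintro ⟨h1, h2⟩
  rw [Ucells, Finset.mem_filter] at h1 h2
  obtain ⟨-, i, hi⟩ := h1
  obtain ⟨-, j, hj⟩ := h2
  have hneg : A.mulVec (-x) = -(A.mulVec x) := by
    rw [Matrix.mulVec_neg]
  have hjx : ‖A.mulVec x‖ = -(A.mulVec x j) := by
    have e : ∑ k, A j k * (-x) k = -(A.mulVec x j) := by
      have e2 : ∑ k, A j k * (-x) k = A.mulVec (-x) j := rfl
      rw [e2, hneg]; simp
    rw [e] at hj
    rw [← hj, hneg, norm_neg]
  have hix : ‖A.mulVec x‖ = A.mulVec x i := hi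
  by_cases hij : i = j
  · subst hij
    have := norm_pos hn hT hx
    linarith [hix, hjx]
  · refine hT x hx i j hij ?_
    have ei : ∑ k, A i k * x k = A.mulVec x i := rfl
    have ej : ∑ k, A j k * x k = A.mulVec x j := rfl
    rw [ei, ej, ← hix]
    have : A.mulVec x j = -‖A.mulVec x‖ := by linarith [hjx]
    rw [this]
    ring
 
lemma mem_or_neg_mem (hn : 2 ≤ n) {x : Fin n → ℝ} (hx : x ∈ cube n) :
    x ∈ Ucells A ∨ -x ∈ Ucells A := by
  obtain ⟨i, hi⟩ := exists_attain (by omega) (A.mulVec x)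
  rcases le_or_gt 0 (A.mulVec x i) with h | h
  · left
    rw [Ucells, Finset.mem_filter]
    exact ⟨hx, i, by rw [hi, abs_of_nonneg h]; rfl⟩
  · right
    rw [Ucells, Finset.mem_filter]
    refine ⟨neg_mem_cube hx, i, ?_⟩
    have e : ∑ k, A i k * (-x) k = A.mulVec (-x) i := rfl
    rw [e, Matrix.mulVec_neg]
    simp only [Pi.neg_apply, norm_neg]
    rw [hi, abs_of_neg h]

lemma sum_split (hn : 2 ≤ n) (hT : TieFree A) (F : (Fin n → ℝ) → ℝ)
    (heven : ∀ x, F (-x) = F x) :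
    ∑ x ∈ cube n, F x = 2 * ∑ x ∈ Ucells A, F x := by
  have hsub : Ucells A ⊆ cube n := Finset.filter_subset _ _
  have split : ∑ x ∈ cube n, F x
      = ∑ x ∈ Ucells A, F x + ∑ x ∈ cube n \ Ucells A, F x := by
    rw [add_comm, Finset.sum_sdiff hsub]
  have bij : ∑ x ∈ cube n \ Ucells A, F x = ∑ x ∈ Ucells A, F x := by
    refine Finset.sum_nbij' (i := fun x => -x) (j := fun x => -x) ?_ ?_ ?_ ?_ ?_
    · intro x hxd
      rw [Finset.mem_sdiff] at hxd
      rcases mem_or_neg_mem hn hxd.1 with h | h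
      · exact absurd h hxd.2
      · exact h
    · intro x hxU
      rw [Finset.mem_sdiff]
      refine ⟨neg_mem_cube (hsub hxU), fun hc => ?_⟩
      exact not_both hn hT (hsub hxU) ⟨hxU, hc⟩
    · intro x _; simp
    · intro x _; simp
    · intro x _; exact (heven x).symm
  rw [split, bij]; ring

lemma cells_disjoint (hT : TieFree A) {i j : Fin n} (hij : i ≠ j) :
    Disjoint (cellS A i) (cellS A j) := by
  rw [Finset.disjoint_left]
  intro x hxi hxj
  rw [cellS, Finset.mem_filter] at hxi hxj
  exact hT x hxi.1 i j hij (by rw [← hxi.2, ← hxj.2])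

lemma U_eq_biUnion : Ucells A = Finset.univ.biUnion (fun i => cellS A i) := by
  ext x
  simp only [Ucells, cellS, Finset.mem_filter, Finset.mem_biUnion, Finset.mem_univ,
    true_and]
  tauto

lemma sum_U_eq (hT : TieFree A) :
    ∑ x ∈ Ucells A, ‖A.mulVec x‖ = ∑ i, ∑ x ∈ cellS A i, ∑ j, A i j * x j := by
  rw [U_eq_biUnion, Finset.sum_biUnion]
  · refine Finset.sum_congr rfl fun i _ => Finset.sum_congr rfl fun x hx => ?_
    rw [cellS, Finset.mem_filter] at hx
    exact hx.2
  · intro i _ j _ hij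
    exact cells_disjoint hT hij

lemma card_U_eq (hT : TieFree A) :
    (Ucells A).card = ∑ i, (cellS A i).card := by
  rw [U_eq_biUnion]
  exact Finset.card_biUnion (fun i _ j _ hij => cells_disjoint hT hij)

lemma card_U_half (hn : 2 ≤ n) (hT : TieFree A) :
    2 * (Ucells A).card = 2 ^ n := by
  have := sum_split (A := A) hn hT (fun _ => (1:ℝ)) (fun _ => rfl)
  simp only [Finset.sum_const, nsmul_eq_mul, mul_one] at this
  rw [cube_card] at this
  exact_mod_cast this.symm

end part


def sfun (a : ℝ) : ℝ := Real.sqrt (-2 * Real.log a)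

def Hfun (a : ℝ) : ℝ := -2 * (a * sfun a) - a ^ 2

lemma sfun_nonneg (a : ℝ) : 0 ≤ sfun a := Real.sqrt_nonneg _

lemma a_mul_sfun_le {a : ℝ} (h0 : 0 ≤ a) (h1 : a ≤ 1/2) :
    a * sfun a ≤ Real.sqrt (2 * a) := by
  rcases eq_or_lt_of_le h0 with h | hpos
  · rw [← h]; simp [sfun]
  · have hlog : Real.log a < 0 := Real.log_neg hpos (by linarith)
    have hmain : a * (-Real.log a) ≤ 1 - a := by
      have := Real.log_le_sub_one_of_pos (x := a⁻¹) (by positivity)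
      rw [Real.log_inv] at this
      have h2 : a * (-Real.log a) ≤ a * (a⁻¹ - 1) := by
        exact mul_le_mul_of_nonneg_left this h0
      have h3 : a * (a⁻¹ - 1) = 1 - a := by field_simp
      linarith
    have e : a * sfun a = Real.sqrt (a ^ 2 * (-2 * Real.log a)) := by
      rw [Real.sqrt_mul (by positivity), Real.sqrt_sq h0, sfun]
    rw [e]
    apply Real.sqrt_le_sqrt
    nlinarith
lemma a_mul_sfun_le_one {a : ℝ} (h0 : 0 ≤ a) (h1 : a ≤ 1/2) : a * sfun a ≤ 1 := by
  refine (a_mul_sfun_le h0 h1).trans ?_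
  rw [show (1:ℝ) = Real.sqrt 1 by simp]
  apply Real.sqrt_le_sqrt; linarith

lemma sfun_pos {a : ℝ} (h0 : 0 < a) (h1 : a < 1) : 0 < sfun a := by
  have := Real.log_neg h0 h1
  exact Real.sqrt_pos.2 (by linarith)

lemma hasDerivAt_sfun {a : ℝ} (h0 : 0 < a) (h1 : a < 1) :
    HasDerivAt sfun (-1 / (a * sfun a)) a := by
  have hlog : Real.log a < 0 := Real.log_neg h0 h1
  have hu : 0 < -2 * Real.log a := by linarith
  have hinner : HasDerivAt (fun x : ℝ => -2 * Real.log x) (-2 * a⁻¹) a :=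
    (Real.hasDerivAt_log (ne_of_gt h0)).const_mul (-2)
  have houter : HasDerivAt Real.sqrt (1 / (2 * Real.sqrt (-2 * Real.log a)))
      (-2 * Real.log a) := Real.hasDerivAt_sqrt (ne_of_gt hu)
  have h := houter.comp a hinner
  have hs : (0:ℝ) < Real.sqrt (-2 * Real.log a) := Real.sqrt_pos.2 hu
  refine h.congr_deriv (Eq.symm ?_)
  rw [sfun]
  field_simp


def Hfun1 (a : ℝ) : ℝ := -2 * sfun a + 2 / sfun a - 2 * a

def Hfun2 (a : ℝ) : ℝ :=
  2 / (a * sfun a) + 2 / (a * sfun a * (-2 * Real.log a)) - 2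

lemma hasDerivAt_Hfun {a : ℝ} (h0 : 0 < a) (h1 : a < 1) :
    HasDerivAt Hfun (Hfun1 a) a := by
  have hs := hasDerivAt_sfun h0 h1
  have hspos := sfun_pos h0 h1
  have hprod : HasDerivAt (fun x : ℝ => x * sfun x)
      (1 * sfun a + a * (-1 / (a * sfun a))) a := (hasDerivAt_id a).mul hs
  have hsq : HasDerivAt (fun x : ℝ => x ^ 2) (2 * a) a := by
    simpa using hasDerivAt_pow 2 a
  have h := (hprod.const_mul (-2)).sub hsq
  refine h.congr_deriv (Eq.symm ?_)
  rw [Hfun1]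
  field_simp
  ring

lemma hasDerivAt_Hfun1 {a : ℝ} (h0 : 0 < a) (h1 : a < 1) :
    HasDerivAt Hfun1 (Hfun2 a) a := by
  have hs := hasDerivAt_sfun h0 h1
  have hspos := sfun_pos h0 h1
  have hu : 0 < -2 * Real.log a := by
    have := Real.log_neg h0 h1; linarith
  have hinv : HasDerivAt (fun x : ℝ => (sfun x)⁻¹)
      (-(-1 / (a * sfun a)) / (sfun a) ^ 2) a := hs.inv (ne_of_gt hspos)
  have h := ((hs.const_mul (-2)).add (hinv.const_mul 2)).sub
    ((hasDerivAt_id a).const_mul 2)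
  have e1 : Hfun1 = fun x => -2 * sfun x + 2 * (sfun x)⁻¹ - 2 * x := by
    funext x; rw [Hfun1]; ring
  rw [e1]
  refine h.congr_deriv (Eq.symm ?_)
  rw [Hfun2]
  have hs2 : (sfun a) ^ 2 = -2 * Real.log a := Real.sq_sqrt (le_of_lt hu)
  rw [← hs2]
  field_simp

lemma Hfun2_nonneg {a : ℝ} (h0 : 0 < a) (h1 : a ≤ 1/2) : 0 ≤ Hfun2 a := by
  have hspos := sfun_pos h0 (by linarith)
  have hu : 0 < -2 * Real.log a := by
    have := Real.log_neg h0 (by linarith); linarith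
  have hle : a * sfun a ≤ 1 := a_mul_sfun_le_one (le_of_lt h0) h1
  have hpos : 0 < a * sfun a := mul_pos h0 hspos
  have t1 : 2 ≤ 2 / (a * sfun a) := by
    rw [le_div_iff₀ hpos]; linarith
  have t2 : 0 < 2 / (a * sfun a * (-2 * Real.log a)) := by positivity
  rw [Hfun2]; linarith

lemma Hfun_continuousOn : ContinuousOn Hfun (Set.Icc 0 (1/2)) := by
  intro a ha
  rcases eq_or_lt_of_le ha.1 with h | hpos
  · -- a = 0
    rw [← h]
    have hH0 : Hfun 0 = 0 := by simp [Hfun, sfun]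
    rw [ContinuousWithinAt, hH0]
    have hb : ∀ᶠ x in nhdsWithin 0 (Set.Icc (0:ℝ) (1/2)),
        ‖Hfun x‖ ≤ (fun x => 2 * Real.sqrt (2 * x) + x) x := by
      filter_upwards [self_mem_nhdsWithin] with x hx
      have hx0 : (0:ℝ) ≤ x := hx.1
      have hx1 : x ≤ 1/2 := hx.2
      have h1 : 0 ≤ x * sfun x := mul_nonneg hx0 (sfun_nonneg x)
      have h2 : x * sfun x ≤ Real.sqrt (2 * x) := a_mul_sfun_le hx0 hx1
      have : |Hfun x| = 2 * (x * sfun x) + x ^ 2 := by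
        rw [Hfun, abs_of_nonpos (by nlinarith)]; ring
      rw [Real.norm_eq_abs, this]
      nlinarith
    refine squeeze_zero_norm' hb ?_
    have hc : ContinuousWithinAt (fun x => 2 * Real.sqrt (2 * x) + x)
        (Set.Icc 0 (1/2)) 0 := by
      apply ContinuousAt.continuousWithinAt
      have : Continuous (fun x : ℝ => 2 * Real.sqrt (2 * x) + x) := by
        continuity
      exact this.continuousAt
    have h00 : 2 * Real.sqrt (2 * 0) + 0 = (0:ℝ) := by simp
    rw [ContinuousWithinAt, h00] at hc
    exact hc
  · -- a > 0
    apply ContinuousAt.continuousWithinAt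
    have hlog : ContinuousAt Real.log a := Real.continuousAt_log (ne_of_gt hpos)
    have : ContinuousAt sfun a := by
      have e : sfun = fun x => Real.sqrt (-2 * Real.log x) := rfl
      rw [e]
      exact Real.continuous_sqrt.continuousAt.comp (hlog.const_mul (-2))
    exact ((continuousAt_id.mul this).const_mul (-2)).sub
      ((continuousAt_id.pow 2))

lemma Hfun_convexOn : ConvexOn ℝ (Set.Icc 0 (1/2)) Hfun := by
  have hint : interior (Set.Icc (0:ℝ) (1/2)) = Set.Ioo 0 (1/2) := interior_Icc
  have hderiv : ∀ a ∈ Set.Ioo (0:ℝ) (1/2), deriv Hfun a = Hfun1 a := fun a ha =>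
    (hasDerivAt_Hfun ha.1 (by linarith [ha.2])).deriv
  refine convexOn_of_deriv2_nonneg (convex_Icc 0 (1/2)) Hfun_continuousOn ?_ ?_ ?_
  · rw [hint]
    intro a ha
    exact (hasDerivAt_Hfun ha.1 (by linarith [ha.2])).differentiableAt.differentiableWithinAt
  · rw [hint]
    refine DifferentiableOn.congr ?_ hderiv
    intro a ha
    exact (hasDerivAt_Hfun1 ha.1 (by linarith [ha.2])).differentiableAt.differentiableWithinAt
  · rw [hint]
    intro a ha
    have heq : deriv Hfun =ᶠ[nhds a] Hfun1 := by
      filter_upwards [IsOpen.mem_nhds isOpen_Ioo ha] with x hx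
      exact hderiv x hx
    have : deriv^[2] Hfun a = deriv (deriv Hfun) a := by
      simp [Function.iterate_succ, Function.iterate_one]
    rw [this, heq.deriv_eq, (hasDerivAt_Hfun1 ha.1 (by linarith [ha.2])).deriv]
    exact Hfun2_nonneg ha.1 (le_of_lt ha.2)


theorem stmt6 : ∃ c : ℝ, 0 < c ∧ ∀ n : ℕ, 2 ≤ n → ∀ A : Matrix (Fin n) (Fin n) ℝ,
    (∀ i, ∑ j, (A i j) ^ 2 = 1) → TieFree A →
    ∑ i : Fin n, (((cellS A i).card : ℝ) / 2 ^ n - 1 / (2 * n)) ^ 2 ≤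
      (n : ℝ) ^ (-(1 / 2) : ℝ) + c * (Real.sqrt (2 * Real.log (2 * n)) - badBeta A) := by
  refine ⟨1, one_pos, ?_⟩
  intro n hn A hA hT
  have hn0 : (0:ℝ) < (n:ℝ) := by
    have : (2:ℝ) ≤ (n:ℝ) := by exact_mod_cast hn
    linarith
  have h2n : (0:ℝ) < 2 ^ n := by positivity
  set m : ℝ := 1 / (2 * (n:ℝ)) with hm
  set α : Fin n → ℝ := fun i => ((cellS A i).card : ℝ) / 2 ^ n with hα
  have hαnn : ∀ i, 0 ≤ α i := by
    intro i; rw [hα]; positivity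
  -- sum of the α's is 1/2
  have hsum : ∑ i, α i = 1/2 := by
    have h1 := card_U_half hn hT
    rw [card_U_eq hT] at h1
    have h2 : (2:ℝ) * ∑ i, ((cellS A i).card : ℝ) = 2 ^ n := by
      exact_mod_cast congrArg (Nat.cast : ℕ → ℝ) h1
    have h3 : ∑ i, α i = (∑ i, ((cellS A i).card : ℝ)) / 2 ^ n := by
      rw [hα, Finset.sum_div]
    rw [h3]
    rw [div_eq_iff (ne_of_gt h2n)]
    linarith
  have hhalf : ∀ i, α i ≤ 1/2 := by
    intro i
    have h4 := Finset.single_le_sum (f := α) (fun j _ => hαnn j) (Finset.mem_univ i)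
    rw [hsum] at h4
    exact h4
  -- badBeta in terms of cells
  have hbeta : badBeta A = 2 * ∑ i, (2 ^ n : ℝ)⁻¹ * ∑ x ∈ cellS A i, ∑ j, A i j * x j := by
    rw [badBeta, sum_split hn hT (fun x => ‖A.mulVec x‖)
      (fun x => by show ‖A.mulVec (-x)‖ = ‖A.mulVec x‖; rw [Matrix.mulVec_neg, norm_neg]), sum_U_eq hT, ← Finset.mul_sum]
    ring
  -- per-cell bound
  have hper : ∀ i, (2 ^ n : ℝ)⁻¹ * ∑ x ∈ cellS A i, ∑ j, A i j * x j
      ≤ α i * sfun (α i) := by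
    intro i
    rcases Nat.eq_zero_or_pos (cellS A i).card with hc | hc
    · have hempty : cellS A i = ∅ := Finset.card_eq_zero.mp hc
      have hz : α i = 0 := by rw [hα]; simp [hempty]
      rw [hempty, hz]
      simp
    · have hb := cell_bound (A i) (hA i) (cellS A i) (Finset.filter_subset _ _) hc
        (by simpa [hα] using hhalf i)
      calc (2 ^ n : ℝ)⁻¹ * ∑ x ∈ cellS A i, ∑ j, A i j * x j
          ≤ (2 ^ n : ℝ)⁻¹ * (((cellS A i).card : ℝ)
              * Real.sqrt (-2 * Real.log (((cellS A i).card : ℝ) / 2 ^ n))) := by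
            exact mul_le_mul_of_nonneg_left hb (by positivity)
        _ = α i * sfun (α i) := by
            rw [hα]
            simp only [sfun]
            ring
  have hβ2 : badBeta A ≤ 2 * ∑ i, α i * sfun (α i) := by
    rw [hbeta]
    have hss := Finset.sum_le_sum (s := Finset.univ) (fun i _ => hper i)
    linarith
  -- Jensen
  have hw : ∑ _i : Fin n, (1/(n:ℝ)) = 1 := by
    rw [Finset.sum_const, Finset.card_univ, Fintype.card_fin, nsmul_eq_mul]
    field_simp
  have hjen := Hfun_convexOn.map_sum_le (t := Finset.univ) (w := fun _ => 1/(n:ℝ))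
    (p := α) (fun i _ => by positivity) hw (fun i _ => ⟨hαnn i, hhalf i⟩)
  have hmean : ∑ i, (1/(n:ℝ)) • α i = m := by
    rw [hm]
    have : ∀ i ∈ Finset.univ, (1/(n:ℝ)) • α i = (1/(n:ℝ)) * α i := fun i _ => rfl
    rw [Finset.sum_congr rfl this, ← Finset.mul_sum, hsum]
    field_simp
  rw [hmean] at hjen
  have hjen2 : (n:ℝ) * Hfun m ≤ ∑ i, Hfun (α i) := by
    have e : ∑ i, (1/(n:ℝ)) • Hfun (α i) = (1/(n:ℝ)) * ∑ i, Hfun (α i) := by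
      simp only [smul_eq_mul]
      rw [← Finset.mul_sum]
    rw [e] at hjen
    rw [← mul_le_mul_iff_right₀ (show (0:ℝ) < (1/(n:ℝ)) by positivity)]
    calc (1/(n:ℝ)) * ((n:ℝ) * Hfun m) = Hfun m := by field_simp
      _ ≤ (1/(n:ℝ)) * ∑ i, Hfun (α i) := hjen
  -- put things together
  have hHdef : ∀ a : ℝ, 2 * (a * sfun a) = -Hfun a - a ^ 2 := by
    intro a; rw [Hfun]; ring
  have hβ3 : badBeta A ≤ -((n:ℝ) * Hfun m) - ∑ i, (α i) ^ 2 := by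
    have e : 2 * ∑ i, α i * sfun (α i) = -(∑ i, Hfun (α i)) - ∑ i, (α i) ^ 2 := by
      rw [Finset.mul_sum, ← Finset.sum_neg_distrib, ← Finset.sum_sub_distrib]
      exact Finset.sum_congr rfl fun i _ => by rw [hHdef]
    rw [e] at hβ2
    linarith
  have hnm : (n:ℝ) * m = 1/2 := by rw [hm]; field_simp
  have hHm : -((n:ℝ) * Hfun m) = sfun m + (n:ℝ) * m ^ 2 := by
    rw [Hfun]
    linear_combination (2 * sfun m) * hnm
  have hsfunm : sfun m = Real.sqrt (2 * Real.log (2 * (n:ℝ))) := by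
    have e : -2 * Real.log m = 2 * Real.log (2 * (n:ℝ)) := by
      rw [hm, one_div, Real.log_inv]; ring
    rw [sfun, e]
  have h2nm : 2 * ((n:ℝ) * m ^ 2) = m := by
    rw [hm]; field_simp
  -- expand the quadratic sum
  have hexpand : ∑ i, (α i - m) ^ 2
      = (∑ i, (α i) ^ 2) - 2 * m * (1/2) + (n:ℝ) * m ^ 2 := by
    have e : ∀ i ∈ Finset.univ, (α i - m) ^ 2 = (α i) ^ 2 - 2 * m * α i + m ^ 2 :=
      fun i _ => by ring
    rw [Finset.sum_congr rfl e, Finset.sum_add_distrib, Finset.sum_sub_distrib,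
      ← Finset.mul_sum, hsum, Finset.sum_const, Finset.card_univ, Fintype.card_fin,
      nsmul_eq_mul]
  have main : ∑ i, (α i - m) ^ 2 ≤ Real.sqrt (2 * Real.log (2 * (n:ℝ))) - badBeta A := by
    rw [hexpand, ← hsfunm]
    have := hβ3
    rw [hHm] at this
    linarith
  have hrpow : (0:ℝ) ≤ (n:ℝ) ^ (-(1/2) : ℝ) := Real.rpow_nonneg (le_of_lt hn0) _
  have hgoal : ∑ i : Fin n, (((cellS A i).card : ℝ) / 2 ^ n - 1 / (2 * (n:ℝ))) ^ 2
      = ∑ i, (α i - m) ^ 2 := rfl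
  rw [hgoal, one_mul]
  linarith
end
end

section
/- Let H be an m×m Hadamard matrix (entries in {−1,1} with H·Hᵀ = m·I_m), let n ≤ m, and for 1 ≤ i ≤ n let u_i ∈ ℝ^n denote the vector (H_{1i}, …, H_{ni})/√m, the i-th column of H truncated to its first n entries and divided by √m. Then for all i ≠ j with 1 ≤ i, j ≤ n, |⟨u_i, u_j⟩| ≤ (m − n)/m, and ‖u_i‖² = n/m for every i. -/
open Finset

noncomputable section

lemma had_col_orth {m : ℕ} (hm : 0 < m) (H : Matrix (Fin m) (Fin m) ℝ)
    (hHad : H * H.transpose = (m : ℝ) • (1 : Matrix (Fin m) (Fin m) ℝ))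
    (i j : Fin m) (hij : i ≠ j) :
    ∑ r : Fin m, H r i * H r j = 0 := by
  have hm' : (m:ℝ) ≠ 0 := Nat.cast_ne_zero.mpr hm.ne'
  have h1 : H * ((m:ℝ)⁻¹ • H.transpose) = 1 := by
    rw [Matrix.mul_smul, hHad, smul_smul, inv_mul_cancel₀ hm', one_smul]
  have h2 : ((m:ℝ)⁻¹ • H.transpose) * H = 1 := mul_eq_one_comm.mp h1
  have h3 : H.transpose * H = (m:ℝ) • 1 := by
    have := congrArg (fun A => (m:ℝ) • A) h2
    simpa [Matrix.smul_mul, smul_smul, mul_inv_cancel₀ hm'] using this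
  have := congrFun (congrFun h3 i) j
  simpa [Matrix.mul_apply, Matrix.transpose_apply, Matrix.one_apply, hij] using this

/-- For an `m × m` Hadamard matrix `H` and `n ≤ m`, the truncated normalized columns
`u_i = (H_{1i}, …, H_{ni})/√m ∈ ℝ^n` (for `1 ≤ i ≤ n`) satisfy
`|⟨u_i, u_j⟩| ≤ (m − n)/m` for `i ≠ j`, and `‖u_i‖² = n/m`. -/
theorem stmt12 {m n : ℕ} (hnm : n ≤ m)
    (H : Matrix (Fin m) (Fin m) ℝ)
    (hent : ∀ i j, H i j = 1 ∨ H i j = -1)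
    (hHad : H * H.transpose = (m : ℝ) • (1 : Matrix (Fin m) (Fin m) ℝ)) :
    (∀ i j : Fin n, i ≠ j →
      |∑ r : Fin n, (H (Fin.castLE hnm r) (Fin.castLE hnm i) / Real.sqrt m) *
          (H (Fin.castLE hnm r) (Fin.castLE hnm j) / Real.sqrt m)| ≤ ((m : ℝ) - n) / m) ∧
    (∀ i : Fin n,
      ∑ r : Fin n, (H (Fin.castLE hnm r) (Fin.castLE hnm i) / Real.sqrt m) ^ 2 =
        (n : ℝ) / m) := by
  have habs : ∀ r c, |H r c| = 1 := fun r c => by rcases hent r c with h|h <;> simp [h]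
  have hsq : ∀ r c, H r c * H r c = 1 := fun r c => by rcases hent r c with h|h <;> simp [h]
  constructor
  · intro i j hij
    have hm : 0 < m := Nat.lt_of_le_of_lt (Nat.zero_le _) (i.isLt.trans_le hnm)
    have hmr : (0:ℝ) < m := by exact_mod_cast hm
    have hsqrt : Real.sqrt m * Real.sqrt m = (m:ℝ) := Real.mul_self_sqrt hmr.le
    set ci := Fin.castLE hnm i
    set cj := Fin.castLE hnm j
    have hcij : ci ≠ cj := fun h => hij (by simpa [ci, cj, Fin.ext_iff] using h)
    have hterm : ∀ r : Fin n, (H (Fin.castLE hnm r) ci / Real.sqrt m) *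
        (H (Fin.castLE hnm r) cj / Real.sqrt m)
        = H (Fin.castLE hnm r) ci * H (Fin.castLE hnm r) cj / m := by
      intro r; rw [div_mul_div_comm, hsqrt]
    rw [Finset.sum_congr rfl (fun r _ => hterm r), ← Finset.sum_div, abs_div,
      abs_of_pos hmr]
    gcongr
    -- |∑ r : Fin n, H (castLE r) ci * H (castLE r) cj| ≤ m - n
    set A := Finset.univ.map (Fin.castLEEmb hnm) with hA
    have e : ∑ r : Fin n, H (Fin.castLE hnm r) ci * H (Fin.castLE hnm r) cj
        = ∑ r ∈ A, H r ci * H r cj := by rw [hA, Finset.sum_map]; rfl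
    have hfull := had_col_orth hm H hHad ci cj hcij
    have hsplit := Finset.sum_add_sum_compl A (fun r => H r ci * H r cj)
    rw [hfull] at hsplit
    have hS : ∑ r ∈ A, H r ci * H r cj = - ∑ r ∈ Aᶜ, H r ci * H r cj := by
      linarith [hsplit]
    have hcard : (Aᶜ.card : ℝ) = (m : ℝ) - n := by
      rw [Finset.card_compl]
      simp [hA, Nat.cast_sub hnm]
    rw [e, hS, abs_neg]
    calc |∑ r ∈ Aᶜ, H r ci * H r cj| ≤ ∑ r ∈ Aᶜ, |H r ci * H r cj| :=
          Finset.abs_sum_le_sum_abs _ _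
      _ = ∑ r ∈ Aᶜ, 1 := by
          refine Finset.sum_congr rfl fun r _ => ?_
          rw [abs_mul, habs, habs, one_mul]
      _ = (Aᶜ.card : ℝ) := by simp
      _ = (m : ℝ) - n := hcard
  · intro i
    have hn : 0 < n := i.pos
    have hm : 0 < m := hn.trans_le hnm
    have hmr : (0:ℝ) < m := by exact_mod_cast hm
    have : ∀ r : Fin n, (H (Fin.castLE hnm r) (Fin.castLE hnm i) / Real.sqrt m) ^ 2
        = 1 / m := by
      intro r
      rw [div_pow, Real.sq_sqrt hmr.le, sq, hsq]
    rw [Finset.sum_congr rfl (fun r _ => this r)]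
    simp [div_eq_mul_inv]
end
end

section
/- There exists a constant C > 0 such that for every n ≥ 1 and every Hadamard matrix H of order m with n ≤ m ≤ n + 3, the following holds: let U be the top-left n×n block of H divided by √m, and let Q be the orthogonal matrix obtained from the QR factorization U = Q·R (equivalently, the columns of Q are the Gram–Schmidt orthonormalization of the columns of U, with R upper triangular having positive diagonal). Then |Q_ij| ≤ C/√n for all 1 ≤ i, j ≤ n. -/
lemma pm_mul {a b : ℝ} (ha : a = 1 ∨ a = -1) (hb : b = 1 ∨ b = -1) :
    a * b = 1 ∨ a * b = -1 := by rcases ha with h|h <;> rcases hb with h'|h' <;>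
  simp [h, h']

lemma pm_ne {a b : ℝ} (ha : a = 1 ∨ a = -1) (hb : b = 1 ∨ b = -1) (h : a ≠ b) :
    a = -b := by rcases ha with h1|h1 <;> rcases hb with h2|h2 <;> simp_all

lemma pm_sq {a : ℝ} (ha : a = 1 ∨ a = -1) : a * a = 1 := by rcases ha with h|h <;> simp [h]

lemma pm_abs {a : ℝ} (ha : a = 1 ∨ a = -1) : |a| = 1 := by rcases ha with h|h <;> simp [h]

lemma pm_ne_zero {a : ℝ} (ha : a = 1 ∨ a = -1) : a ≠ 0 := by rcases ha with h|h <;> simp [h]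

/-- pointwise classification identities -/
lemma pt13 (Ba Bb Bc ha hb hc s t xa xb xc : ℝ)
    (sqBa : Ba * Ba = 1) (sqha : ha * ha = 1)
    (aBa : |Ba| = 1) (aha : |ha| = 1)
    (hs : Bb = s * (ha * hb) * Ba) (ht : Bc = t * (ha * hc) * Ba) :
    (xa * Ba + xb * Bb + xc * Bc) * Ba = ha * (xa * ha + s * (xb * hb) + t * (xc * hc))
    ∧ (xa * Ba + xb * Bb + xc * Bc) * Bb = s * (hb * (xa * ha + s * (xb * hb) + t * (xc * hc)))
    ∧ (xa * Ba + xb * Bb + xc * Bc) * Bc = t * (hc * (xa * ha + s * (xb * hb) + t * (xc * hc)))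
    ∧ |xa * Ba + xb * Bb + xc * Bc| = |xa * ha + s * (xb * hb) + t * (xc * hc)| := by
  subst hs ht
  refine ⟨?_, ?_, ?_, ?_⟩
  · linear_combination (xa + s*xb*ha*hb + t*xc*ha*hc) * sqBa - xa * sqha
  · linear_combination (s*xa*ha*hb + s*s*xb*ha*ha*hb*hb + s*t*xc*ha*ha*hb*hc) * sqBa
      + (s*s*xb*hb*hb + s*t*xc*hb*hc) * sqha
  · linear_combination (t*xa*ha*hc + s*t*xb*ha*ha*hb*hc + t*t*xc*ha*ha*hc*hc) * sqBa
      + (s*t*xb*hb*hc + t*t*xc*hc*hc) * sqha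
  · have hg : xa * Ba + xb * (s * (ha * hb) * Ba) + xc * (t * (ha * hc) * Ba)
        = (Ba * ha) * (xa * ha + s * (xb * hb) + t * (xc * hc)) := by
      linear_combination -(xa * Ba) * sqha
    rw [hg, abs_mul, abs_mul, aBa, aha]
    ring_nf

/-- summing the pointwise identities over one class -/
lemma cls13 {ι : Type*} (T S : Finset ι) (Ba Bb Bc : ι → ℝ) (ha hb hc : ℝ)
    (u v xa xb xc : ℝ) (g : ι → ℝ)
    (hST : S ⊆ T)
    (hBa : ∀ i ∈ T, Ba i = 1 ∨ Ba i = -1) (hha : ha = 1 ∨ ha = -1)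
    (hu : ∀ i ∈ S, Ba i * Bb i = u * (ha * hb)) (hv : ∀ i ∈ S, Ba i * Bc i = v * (ha * hc))
    (hgdef : ∀ i ∈ T, g i = xa * Ba i + xb * Bb i + xc * Bc i) :
    (∑ i ∈ S, g i * Ba i = (S.card : ℝ) * (ha * (xa * ha + u * (xb * hb) + v * (xc * hc))))
    ∧ (∑ i ∈ S, g i * Bb i
        = (S.card : ℝ) * (u * (hb * (xa * ha + u * (xb * hb) + v * (xc * hc)))))
    ∧ (∑ i ∈ S, g i * Bc i
        = (S.card : ℝ) * (v * (hc * (xa * ha + u * (xb * hb) + v * (xc * hc)))))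
    ∧ (∑ i ∈ S, |g i| = (S.card : ℝ) * |xa * ha + u * (xb * hb) + v * (xc * hc)|) := by
  have hpt : ∀ i ∈ S,
      g i * Ba i = ha * (xa * ha + u * (xb * hb) + v * (xc * hc))
      ∧ g i * Bb i = u * (hb * (xa * ha + u * (xb * hb) + v * (xc * hc)))
      ∧ g i * Bc i = v * (hc * (xa * ha + u * (xb * hb) + v * (xc * hc)))
      ∧ |g i| = |xa * ha + u * (xb * hb) + v * (xc * hc)| := by
    intro i hi
    have hiT := hST hi
    have sqBa := pm_sq (hBa i hiT)
    have sqha := pm_sq hha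
    have aBa := pm_abs (hBa i hiT)
    have aha := pm_abs hha
    have hs : Bb i = u * (ha * hb) * Ba i := by
      linear_combination (Ba i) * hu i hi - (Bb i) * sqBa
    have ht : Bc i = v * (ha * hc) * Ba i := by
      linear_combination (Ba i) * hv i hi - (Bc i) * sqBa
    have := pt13 (Ba i) (Bb i) (Bc i) ha hb hc u v xa xb xc sqBa sqha aBa aha hs ht
    rw [hgdef i hiT]
    exact this
  refine ⟨?_, ?_, ?_, ?_⟩
  · rw [Finset.sum_congr rfl (fun i hi => (hpt i hi).1), Finset.sum_const, nsmul_eq_mul]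
  · rw [Finset.sum_congr rfl (fun i hi => (hpt i hi).2.1), Finset.sum_const, nsmul_eq_mul]
  · rw [Finset.sum_congr rfl (fun i hi => (hpt i hi).2.2.1), Finset.sum_const, nsmul_eq_mul]
  · rw [Finset.sum_congr rfl (fun i hi => (hpt i hi).2.2.2), Finset.sum_const, nsmul_eq_mul]

lemma arith13 (P σ k1 k2 k3 k4 g1 g2 g3 g4 : ℝ) (hP : 0 < P)
    (hk1 : 0 ≤ k1) (hk2 : 0 ≤ k2) (hk3 : 0 ≤ k3) (hk4 : 0 ≤ k4)
    (e1 : k1 * g1 = P - σ) (e2 : k2 * g2 = σ) (e3 : k3 * g3 = σ) (e4 : k4 * g4 = -σ)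
    (hco : g1 = g2 + g3 - g4) :
    k1 * |g1| + k2 * |g2| + k3 * |g3| + k4 * |g4| ≤ 3 * P := by
  have a1 : k1 * |g1| = |P - σ| := by rw [← abs_of_nonneg hk1, ← abs_mul, e1]
  have a2 : k2 * |g2| = |σ| := by rw [← abs_of_nonneg hk2, ← abs_mul, e2]
  have a3 : k3 * |g3| = |σ| := by rw [← abs_of_nonneg hk3, ← abs_mul, e3]
  have a4 : k4 * |g4| = |σ| := by rw [← abs_of_nonneg hk4, ← abs_mul, e4, abs_neg]
  rw [a1, a2, a3, a4]
  have key : 0 ≤ σ ∧ σ ≤ P := by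
    rcases eq_or_lt_of_le hk2 with h2 | h2
    · have hσ : σ = 0 := by rw [← e2, ← h2]; ring
      constructor <;> simp [hσ] <;> linarith
    rcases eq_or_lt_of_le hk3 with h3 | h3
    · have hσ : σ = 0 := by rw [← e3, ← h3]; ring
      constructor <;> simp [hσ] <;> linarith
    rcases eq_or_lt_of_le hk4 with h4 | h4
    · have hσ : σ = 0 := by
        have : -σ = 0 := by rw [← e4, ← h4]; ring
        linarith
      constructor <;> simp [hσ] <;> linarith
    rcases eq_or_lt_of_le hk1 with h1 | h1
    · have hσ : σ = P := by
        have : P - σ = 0 := by rw [← e1, ← h1]; ring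
        linarith
      constructor <;> simp [hσ] <;> linarith
    · have hrel : (P - σ) * (k2 * k3 * k4)
          = σ * (k1 * k3 * k4 + k1 * k2 * k4 + k1 * k2 * k3) := by
        linear_combination (-(k2*k3*k4))*e1 + (k1*k3*k4)*e2 + (k1*k2*k4)*e3 + (-(k1*k2*k3))*e4 + (k1*k2*k3*k4)*hco
      have hA : 0 < k1 * k3 * k4 + k1 * k2 * k4 + k1 * k2 * k3 := by positivity
      have hB : 0 < k2 * k3 * k4 := by positivity
      constructor
      · by_contra hσ
        push_neg at hσ
        have h5 : σ * (k1 * k3 * k4 + k1 * k2 * k4 + k1 * k2 * k3) < 0 :=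
          mul_neg_of_neg_of_pos hσ hA
        have h6 : 0 < (P - σ) * (k2 * k3 * k4) := mul_pos (by linarith) hB
        linarith [hrel]
      · by_contra hσ
        push_neg at hσ
        have h5 : 0 < σ * (k1 * k3 * k4 + k1 * k2 * k4 + k1 * k2 * k3) :=
          mul_pos (by linarith) hA
        have h6 : (P - σ) * (k2 * k3 * k4) < 0 :=
          mul_neg_of_neg_of_pos (by linarith) hB
        linarith [hrel]
  obtain ⟨hσ0, hσP⟩ := key
  rw [abs_of_nonneg hσ0, abs_of_nonneg (by linarith : (0:ℝ) ≤ P - σ)]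
  linarith

lemma key13 {ι : Type*} [DecidableEq ι] (T D : Finset ι)
    (B : ι → ι → ℝ) (h : ι → ℝ)
    (hB : ∀ a ∈ D, ∀ i ∈ T, B a i = 1 ∨ B a i = -1)
    (hh : ∀ a ∈ D, h a = 1 ∨ h a = -1)
    (x : ι → ℝ) (P : ℝ) (hP : 0 < P)
    (g : ι → ℝ) (hg : ∀ i ∈ T, g i = ∑ a ∈ D, x a * B a i)
    (heq : ∀ a ∈ D, ∑ i ∈ T, g i * B a i = P * h a)
    (hD : D.card ≤ 3) :
    ∑ i ∈ T, |g i| ≤ 3 * P := by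
  have hcases : D.card = 0 ∨ D.card = 1 ∨ D.card = 2 ∨ D.card = 3 := by omega
  rcases hcases with hc | hc | hc | hc
  · -- empty
    rw [Finset.card_eq_zero] at hc
    subst hc
    have : ∑ i ∈ T, |g i| = 0 := by
      apply Finset.sum_eq_zero
      intro i hi
      simp [hg i hi]
    rw [this]; positivity
  · -- one row
    obtain ⟨a, rfl⟩ := Finset.card_eq_one.mp hc
    have hgd : ∀ i ∈ T, g i = x a * B a i + 0 * B a i + 0 * B a i := by
      intro i hi; rw [hg i hi]; simp
    have hBa : ∀ i ∈ T, B a i = 1 ∨ B a i = -1 := hB a (Finset.mem_singleton_self a)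
    have hha : h a = 1 ∨ h a = -1 := hh a (Finset.mem_singleton_self a)
    have hu : ∀ i ∈ T, B a i * B a i = 1 * (h a * h a) := by
      intro i hi; rw [pm_sq (hBa i hi), pm_sq hha]; norm_num
    obtain ⟨c1, _, _, c4⟩ := cls13 T T (B a) (B a) (B a) (h a) (h a) (h a) 1 1 (x a) 0 0 g
      (Finset.Subset.refl T) hBa hha hu hu hgd
    have E1 := heq a (Finset.mem_singleton_self a)
    rw [c1] at E1
    -- (T.card) * (h a * γ) = P * h a  with γ = x a * h a + 0 + 0
    set γ : ℝ := x a * h a + 1 * (0 * h a) + 1 * (0 * h a) with hγ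
    have hκγ : (T.card : ℝ) * γ = P := by
      have hane : h a ≠ 0 := pm_ne_zero hha
      apply mul_left_cancel₀ hane
      calc h a * ((T.card : ℝ) * γ) = (T.card : ℝ) * (h a * γ) := by ring
        _ = P * h a := E1
        _ = h a * P := by ring
    rw [c4]
    have : (T.card : ℝ) * |γ| = |(T.card : ℝ) * γ| := by
      rw [abs_mul, abs_of_nonneg (by positivity : (0:ℝ) ≤ (T.card:ℝ))]
    rw [this, hκγ, abs_of_pos hP]
    linarith
  · -- two rows
    obtain ⟨a, b, hab, rfl⟩ := Finset.card_eq_two.mp hc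
    have hmema : a ∈ ({a, b} : Finset ι) := Finset.mem_insert_self a _
    have hmemb : b ∈ ({a, b} : Finset ι) := by simp
    have hBa := hB a hmema
    have hBb := hB b hmemb
    have hha := hh a hmema
    have hhb := hh b hmemb
    have hgd : ∀ i ∈ T, g i = x a * B a i + x b * B b i + 0 * B a i := by
      intro i hi; rw [hg i hi, Finset.sum_pair hab]; ring
    set pb : ι → Prop := fun i => B a i * B b i = h a * h b with hpb
    have hdecb : DecidablePred pb := Classical.decPred pb
    set T1 := T.filter pb with hT1
    set T2 := T.filter (fun i => ¬ pb i) with hT2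
    have hT1sub : T1 ⊆ T := Finset.filter_subset _ _
    have hT2sub : T2 ⊆ T := Finset.filter_subset _ _
    have hsq : ∀ i ∈ T, B a i * B a i = 1 * (h a * h a) := by
      intro i hi; rw [pm_sq (hBa i hi), pm_sq hha]; norm_num
    have hu1 : ∀ i ∈ T1, B a i * B b i = 1 * (h a * h b) := by
      intro i hi
      have := (Finset.mem_filter.mp hi).2
      rw [this]; ring
    have hu2 : ∀ i ∈ T2, B a i * B b i = (-1) * (h a * h b) := by
      intro i hi
      obtain ⟨hiT, hne⟩ := Finset.mem_filter.mp hi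
      have := pm_ne (pm_mul (hBa i hiT) (hBb i hiT)) (pm_mul hha hhb) hne
      rw [this]; ring
    obtain ⟨c1a, c1b, _, c1abs⟩ := cls13 T T1 (B a) (B b) (B a) (h a) (h b) (h a)
      1 1 (x a) (x b) 0 g hT1sub hBa hha hu1 (fun i hi => hsq i (hT1sub hi)) hgd
    obtain ⟨c2a, c2b, _, c2abs⟩ := cls13 T T2 (B a) (B b) (B a) (h a) (h b) (h a)
      (-1) 1 (x a) (x b) 0 g hT2sub hBa hha hu2 (fun i hi => hsq i (hT2sub hi)) hgd
    set γ1 : ℝ := x a * h a + 1 * (x b * h b) + 1 * (0 * h a) with hγ1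
    set γ2 : ℝ := x a * h a + (-1) * (x b * h b) + 1 * (0 * h a) with hγ2
    set κ1 : ℝ := (T1.card : ℝ)
    set κ2 : ℝ := (T2.card : ℝ)
    have hsplit : ∀ f : ι → ℝ, ∑ i ∈ T, f i = ∑ i ∈ T1, f i + ∑ i ∈ T2, f i := by
      intro f
      rw [hT1, hT2]
      exact (Finset.sum_filter_add_sum_filter_not T pb f).symm
    have Ea := heq a hmema
    have Eb := heq b hmemb
    rw [hsplit, c1a, c2a] at Ea
    rw [hsplit, c1b, c2b] at Eb
    have hane : h a ≠ 0 := pm_ne_zero hha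
    have hbne : h b ≠ 0 := pm_ne_zero hhb
    have E1 : κ1 * γ1 + κ2 * γ2 = P := by
      apply mul_left_cancel₀ hane
      calc h a * (κ1 * γ1 + κ2 * γ2) = κ1 * (h a * γ1) + κ2 * (h a * γ2) := by ring
        _ = P * h a := Ea
        _ = h a * P := by ring
    have E2 : κ1 * γ1 - κ2 * γ2 = P := by
      apply mul_left_cancel₀ hbne
      calc h b * (κ1 * γ1 - κ2 * γ2)
          = κ1 * (1 * (h b * γ1)) + κ2 * ((-1) * (h b * γ2)) := by ring
        _ = P * h b := Eb
        _ = h b * P := by ring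
    have h1 : κ1 * γ1 = P := by linarith
    have h2 : κ2 * γ2 = 0 := by linarith
    rw [hsplit, c1abs, c2abs]
    have r1 : κ1 * |γ1| = |κ1 * γ1| := by
      rw [abs_mul, abs_of_nonneg (Nat.cast_nonneg _ : (0:ℝ) ≤ κ1)]
    have r2 : κ2 * |γ2| = |κ2 * γ2| := by
      rw [abs_mul, abs_of_nonneg (Nat.cast_nonneg _ : (0:ℝ) ≤ κ2)]
    rw [r1, r2, h1, h2, abs_of_pos hP]
    simp
    linarith
  · -- three rows
    obtain ⟨a, b, c, hab, hac, hbc, rfl⟩ := Finset.card_eq_three.mp hc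
    have hmema : a ∈ ({a, b, c} : Finset ι) := Finset.mem_insert_self a _
    have hmemb : b ∈ ({a, b, c} : Finset ι) := by simp
    have hmemc : c ∈ ({a, b, c} : Finset ι) := by simp
    have hBa := hB a hmema
    have hBb := hB b hmemb
    have hBc := hB c hmemc
    have hha := hh a hmema
    have hhb := hh b hmemb
    have hhc := hh c hmemc
    have hgd : ∀ i ∈ T, g i = x a * B a i + x b * B b i + x c * B c i := by
      intro i hi
      rw [hg i hi]
      rw [Finset.sum_insert (by simp [hab, hac]), Finset.sum_insert (by simp [hbc]),
        Finset.sum_singleton]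
      ring
    set pb : ι → Prop := fun i => B a i * B b i = h a * h b with hpb
    set pc : ι → Prop := fun i => B a i * B c i = h a * h c with hpc
    have hdecb : DecidablePred pb := Classical.decPred pb
    have hdecc : DecidablePred pc := Classical.decPred pc
    set T1 := (T.filter pb).filter pc with hT1
    set T2 := (T.filter pb).filter (fun i => ¬ pc i) with hT2
    set T3 := (T.filter (fun i => ¬ pb i)).filter pc with hT3
    set T4 := (T.filter (fun i => ¬ pb i)).filter (fun i => ¬ pc i) with hT4
    have hT1sub : T1 ⊆ T := (Finset.filter_subset _ _).trans (Finset.filter_subset _ _)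
    have hT2sub : T2 ⊆ T := (Finset.filter_subset _ _).trans (Finset.filter_subset _ _)
    have hT3sub : T3 ⊆ T := (Finset.filter_subset _ _).trans (Finset.filter_subset _ _)
    have hT4sub : T4 ⊆ T := (Finset.filter_subset _ _).trans (Finset.filter_subset _ _)
    have hbval : ∀ i ∈ T, pb i → B a i * B b i = 1 * (h a * h b) := by
      intro i hi hp; rw [hp]; ring
    have hbval' : ∀ i ∈ T, ¬ pb i → B a i * B b i = (-1) * (h a * h b) := by
      intro i hi hp
      have := pm_ne (pm_mul (hBa i hi) (hBb i hi)) (pm_mul hha hhb) hp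
      rw [this]; ring
    have hcval : ∀ i ∈ T, pc i → B a i * B c i = 1 * (h a * h c) := by
      intro i hi hp; rw [hp]; ring
    have hcval' : ∀ i ∈ T, ¬ pc i → B a i * B c i = (-1) * (h a * h c) := by
      intro i hi hp
      have := pm_ne (pm_mul (hBa i hi) (hBc i hi)) (pm_mul hha hhc) hp
      rw [this]; ring
    have m1 : ∀ i ∈ T1, i ∈ T ∧ pb i ∧ pc i := by
      intro i hi
      obtain ⟨hi', h2⟩ := Finset.mem_filter.mp hi
      obtain ⟨hi'', h1⟩ := Finset.mem_filter.mp hi'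
      exact ⟨hi'', h1, h2⟩
    have m2 : ∀ i ∈ T2, i ∈ T ∧ pb i ∧ ¬ pc i := by
      intro i hi
      obtain ⟨hi', h2⟩ := Finset.mem_filter.mp hi
      obtain ⟨hi'', h1⟩ := Finset.mem_filter.mp hi'
      exact ⟨hi'', h1, h2⟩
    have m3 : ∀ i ∈ T3, i ∈ T ∧ ¬ pb i ∧ pc i := by
      intro i hi
      obtain ⟨hi', h2⟩ := Finset.mem_filter.mp hi
      obtain ⟨hi'', h1⟩ := Finset.mem_filter.mp hi'
      exact ⟨hi'', h1, h2⟩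
    have m4 : ∀ i ∈ T4, i ∈ T ∧ ¬ pb i ∧ ¬ pc i := by
      intro i hi
      obtain ⟨hi', h2⟩ := Finset.mem_filter.mp hi
      obtain ⟨hi'', h1⟩ := Finset.mem_filter.mp hi'
      exact ⟨hi'', h1, h2⟩
    obtain ⟨c1a, c1b, c1c, c1abs⟩ := cls13 T T1 (B a) (B b) (B c) (h a) (h b) (h c)
      1 1 (x a) (x b) (x c) g hT1sub hBa hha
      (fun i hi => hbval i (m1 i hi).1 (m1 i hi).2.1)
      (fun i hi => hcval i (m1 i hi).1 (m1 i hi).2.2) hgd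
    obtain ⟨c2a, c2b, c2c, c2abs⟩ := cls13 T T2 (B a) (B b) (B c) (h a) (h b) (h c)
      1 (-1) (x a) (x b) (x c) g hT2sub hBa hha
      (fun i hi => hbval i (m2 i hi).1 (m2 i hi).2.1)
      (fun i hi => hcval' i (m2 i hi).1 (m2 i hi).2.2) hgd
    obtain ⟨c3a, c3b, c3c, c3abs⟩ := cls13 T T3 (B a) (B b) (B c) (h a) (h b) (h c)
      (-1) 1 (x a) (x b) (x c) g hT3sub hBa hha
      (fun i hi => hbval' i (m3 i hi).1 (m3 i hi).2.1)
      (fun i hi => hcval i (m3 i hi).1 (m3 i hi).2.2) hgd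
    obtain ⟨c4a, c4b, c4c, c4abs⟩ := cls13 T T4 (B a) (B b) (B c) (h a) (h b) (h c)
      (-1) (-1) (x a) (x b) (x c) g hT4sub hBa hha
      (fun i hi => hbval' i (m4 i hi).1 (m4 i hi).2.1)
      (fun i hi => hcval' i (m4 i hi).1 (m4 i hi).2.2) hgd
    set γ1 : ℝ := x a * h a + 1 * (x b * h b) + 1 * (x c * h c) with hγ1
    set γ2 : ℝ := x a * h a + 1 * (x b * h b) + (-1) * (x c * h c) with hγ2
    set γ3 : ℝ := x a * h a + (-1) * (x b * h b) + 1 * (x c * h c) with hγ3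
    set γ4 : ℝ := x a * h a + (-1) * (x b * h b) + (-1) * (x c * h c) with hγ4
    set κ1 : ℝ := (T1.card : ℝ)
    set κ2 : ℝ := (T2.card : ℝ)
    set κ3 : ℝ := (T3.card : ℝ)
    set κ4 : ℝ := (T4.card : ℝ)
    have hsplit : ∀ f : ι → ℝ,
        ∑ i ∈ T, f i = ∑ i ∈ T1, f i + ∑ i ∈ T2, f i + (∑ i ∈ T3, f i + ∑ i ∈ T4, f i) := by
      intro f
      rw [hT1, hT2, hT3, hT4]
      rw [Finset.sum_filter_add_sum_filter_not (T.filter pb) pc f,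
        Finset.sum_filter_add_sum_filter_not (T.filter (fun i => ¬ pb i)) pc f]
      exact (Finset.sum_filter_add_sum_filter_not T pb f).symm
    have Ea := heq a hmema
    have Eb := heq b hmemb
    have Ec := heq c hmemc
    rw [hsplit, c1a, c2a, c3a, c4a] at Ea
    rw [hsplit, c1b, c2b, c3b, c4b] at Eb
    rw [hsplit, c1c, c2c, c3c, c4c] at Ec
    have hane : h a ≠ 0 := pm_ne_zero hha
    have hbne : h b ≠ 0 := pm_ne_zero hhb
    have hcne : h c ≠ 0 := pm_ne_zero hhc
    have E1 : κ1 * γ1 + κ2 * γ2 + κ3 * γ3 + κ4 * γ4 = P := by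
      apply mul_left_cancel₀ hane
      calc h a * (κ1 * γ1 + κ2 * γ2 + κ3 * γ3 + κ4 * γ4)
          = κ1 * (h a * γ1) + κ2 * (h a * γ2) + (κ3 * (h a * γ3) + κ4 * (h a * γ4)) := by ring
        _ = P * h a := Ea
        _ = h a * P := by ring
    have E2 : κ1 * γ1 + κ2 * γ2 - κ3 * γ3 - κ4 * γ4 = P := by
      apply mul_left_cancel₀ hbne
      calc h b * (κ1 * γ1 + κ2 * γ2 - κ3 * γ3 - κ4 * γ4)
          = κ1 * (1 * (h b * γ1)) + κ2 * (1 * (h b * γ2))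
            + (κ3 * ((-1) * (h b * γ3)) + κ4 * ((-1) * (h b * γ4))) := by ring
        _ = P * h b := Eb
        _ = h b * P := by ring
    have E3 : κ1 * γ1 - κ2 * γ2 + κ3 * γ3 - κ4 * γ4 = P := by
      apply mul_left_cancel₀ hcne
      calc h c * (κ1 * γ1 - κ2 * γ2 + κ3 * γ3 - κ4 * γ4)
          = κ1 * (1 * (h c * γ1)) + κ2 * ((-1) * (h c * γ2))
            + (κ3 * (1 * (h c * γ3)) + κ4 * ((-1) * (h c * γ4))) := by ring
        _ = P * h c := Ec
        _ = h c * P := by ring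
    set σ : ℝ := κ2 * γ2 with hσ
    have e1 : κ1 * γ1 = P - σ := by linarith
    have e3 : κ3 * γ3 = σ := by linarith
    have e4 : κ4 * γ4 = -σ := by linarith
    have hco : γ1 = γ2 + γ3 - γ4 := by rw [hγ1, hγ2, hγ3, hγ4]; ring
    have harith := arith13 P σ κ1 κ2 κ3 κ4 γ1 γ2 γ3 γ4 hP
      (Nat.cast_nonneg _) (Nat.cast_nonneg _) (Nat.cast_nonneg _) (Nat.cast_nonneg _)
      e1 rfl e3 e4 hco
    rw [hsplit, c1abs, c2abs, c3abs, c4abs]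
    linarith


open Finset

noncomputable section

set_option maxHeartbeats 2000000 in
/-- There is an absolute constant `C > 0` such that for every `n ≥ 1` and every Hadamard
matrix `H` of order `m` with `n ≤ m ≤ n + 3`, the orthogonal factor `Q` of the QR
factorization (with `R` upper triangular with positive diagonal) of the normalized
top-left `n × n` block `U = H_{[1:n,1:n]}/√m` has all entries bounded by `C/√n`. -/
theorem stmt13 : ∃ C : ℝ, 0 < C ∧ ∀ (n m : ℕ), 1 ≤ n → ∀ (hnm : n ≤ m), m ≤ n + 3 →
    ∀ H : Matrix (Fin m) (Fin m) ℝ,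
      (∀ i j, H i j = 1 ∨ H i j = -1) →
      H * H.transpose = (m : ℝ) • (1 : Matrix (Fin m) (Fin m) ℝ) →
      ∀ Q R : Matrix (Fin n) (Fin n) ℝ,
        Q * Q.transpose = 1 →
        (∀ i j : Fin n, (j : ℕ) < (i : ℕ) → R i j = 0) →
        (∀ i : Fin n, 0 < R i i) →
        (Matrix.of fun i j : Fin n =>
            H (Fin.castLE hnm i) (Fin.castLE hnm j) / Real.sqrt m) = Q * R →
        ∀ i j : Fin n, |Q i j| ≤ C / Real.sqrt n := by
  refine ⟨4, by norm_num, ?_⟩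
  intro n m hn hnm hm3 H hH hHH Q R hQQt hRtri hRpos hU k j
  classical
  have hm1 : 1 ≤ m := le_trans hn hnm
  have hmpos : (0:ℝ) < m := by exact_mod_cast hm1
  have hnpos : (0:ℝ) < n := by exact_mod_cast hn
  set s : ℝ := Real.sqrt m with hs
  have hspos : 0 < s := Real.sqrt_pos.mpr hmpos
  have hssq : s * s = m := Real.mul_self_sqrt (le_of_lt hmpos)
  set e : Fin n → Fin m := Fin.castLE hnm with he
  -- entries of the top-left block
  have hent : ∀ k' i' : Fin n, H (e k') (e i') = s * (Q * R) k' i' := by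
    intro k' i'
    have h1 : H (e k') (e i') / s = (Q * R) k' i' := congrFun (congrFun hU k') i'
    field_simp at h1
    linarith [h1]
  -- transpose identities
  have hQtQ : Q.transpose * Q = 1 := mul_eq_one_comm.mp hQQt
  have hHtH : H.transpose * H = (m:ℝ) • (1 : Matrix (Fin m) (Fin m) ℝ) := by
    have h1 : H * ((m:ℝ)⁻¹ • H.transpose) = 1 := by
      rw [Matrix.mul_smul, hHH, smul_smul, inv_mul_cancel₀ (ne_of_gt hmpos), one_smul]
    have h2 := mul_eq_one_comm.mp h1
    calc H.transpose * H = (m:ℝ) • (((m:ℝ)⁻¹ • H.transpose) * H) := by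
          rw [Matrix.smul_mul, smul_smul, mul_inv_cancel₀ (ne_of_gt hmpos), one_smul]
      _ = (m:ℝ) • (1 : Matrix (Fin m) (Fin m) ℝ) := by rw [h2]
  -- orthogonality as sums
  have horthC : ∀ i i' : Fin m, ∑ k', H k' i * H k' i' = if i = i' then (m:ℝ) else 0 := by
    intro i i'
    have h1 := congrFun (congrFun hHtH i) i'
    simpa [Matrix.mul_apply, Matrix.transpose_apply, Matrix.one_apply, Matrix.smul_apply,
      mul_ite, mul_one, mul_zero] using h1
  have horthR : ∀ c c' : Fin m, ∑ i, H c i * H c' i = if c = c' then (m:ℝ) else 0 := by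
    intro c c'
    have h1 := congrFun (congrFun hHH c) c'
    simpa [Matrix.mul_apply, Matrix.transpose_apply, Matrix.one_apply, Matrix.smul_apply,
      mul_ite, mul_one, mul_zero] using h1
  -- R is invertible with upper triangular inverse
  have hRbt : R.BlockTriangular id := by
    intro a b hab
    exact hRtri a b hab
  have hRdet : R.det = ∏ i, R i i := Matrix.det_of_upperTriangular hRbt
  have hRdetpos : 0 < R.det := by
    rw [hRdet]; exact Finset.prod_pos (fun i _ => hRpos i)
  have hRunit : IsUnit R.det := isUnit_iff_ne_zero.mpr (ne_of_gt hRdetpos)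
  haveI hRinvbl : Invertible R := R.invertibleOfIsUnitDet hRunit
  have hRibt : R⁻¹.BlockTriangular id := Matrix.blockTriangular_inv_of_blockTriangular hRbt
  have hRR : R * R⁻¹ = 1 := Matrix.mul_nonsing_inv R hRunit
  -- the coefficient vector b
  set b : Fin n → ℝ := fun i => R⁻¹ i j / s with hb
  have hb0 : ∀ i : Fin n, (j:ℕ) < (i:ℕ) → b i = 0 := by
    intro i hij
    have : R⁻¹ i j = 0 := hRibt hij
    simp [hb, this]
  have hQcol : ∀ k' : Fin n, Q k' j = ∑ i', H (e k') (e i') * b i' := by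
    intro k'
    have h1 : Q = (Q * R) * R⁻¹ := by rw [Matrix.mul_assoc, hRR, Matrix.mul_one]
    have h2 : Q k' j = ∑ i', (Q * R) k' i' * R⁻¹ i' j := by
      rw [h1]; rw [Matrix.mul_apply]; exact Finset.sum_congr rfl (fun i' _ => by
        rw [← h1])
    rw [h2]
    refine Finset.sum_congr rfl (fun i' _ => ?_)
    rw [hent k' i', hb]
    field_simp
  -- padding
  set pad : (Fin n → ℝ) → Fin m → ℝ :=
    fun w i => if hi : (i:ℕ) < n then w ⟨i, hi⟩ else 0 with hpaddef
  have hpad : ∀ (f : Fin m → ℝ) (w : Fin n → ℝ),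
      ∑ i, f i * pad w i = ∑ i', f (e i') * w i' := by
    intro f w
    rw [show (Finset.univ : Finset (Fin n)) = Finset.univ from rfl]
    have hmap : ∑ i ∈ Finset.univ.map ⟨e, Fin.castLE_injective hnm⟩, f i * pad w i
        = ∑ i', f (e i') * w i' := by
      rw [Finset.sum_map]
      refine Finset.sum_congr rfl (fun i' _ => ?_)
      have h1 : ((e i' : Fin m) : ℕ) < n := i'.isLt
      simp only [Function.Embedding.coeFn_mk, hpaddef]
      rw [dif_pos h1]
      congr 1
    rw [← hmap]
    apply (Finset.sum_subset (Finset.subset_univ _) ?_).symm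
    intro i _ hnot
    have : ¬ ((i:ℕ) < n) := by
      intro hlt
      apply hnot
      rw [Finset.mem_map]
      exact ⟨⟨i, hlt⟩, Finset.mem_univ _, rfl⟩
    rw [hpaddef]
    simp only [dif_neg this, mul_zero]
  set qh : Fin m → ℝ := pad (fun k' => Q k' j) with hqh
  set bh : Fin m → ℝ := pad b with hbh
  set x : Fin m → ℝ := fun a => ∑ i, H a i * bh i with hx
  set D : Finset (Fin m) := Finset.univ.filter (fun a : Fin m => n ≤ (a:ℕ)) with hD
  set g : Fin m → ℝ := fun i => ∑ a ∈ D, x a * H a i with hg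
  set ρ : Fin m → ℝ := fun i => ∑ k', H k' i * qh k' with hρ
  -- values of ρ on the first n coordinates
  have hρcast : ∀ i' : Fin n, ρ (e i') = s * R j i' := by
    intro i'
    have h1 : ρ (e i') = ∑ k'', H (e k'') (e i') * Q k'' j :=
      hpad (fun k' => H k' (e i')) (fun k' => Q k' j)
    have h2 : (Q * R).transpose * Q = R.transpose := by
      rw [Matrix.transpose_mul, Matrix.mul_assoc, hQtQ, Matrix.mul_one]
    have h3 : ∑ k'', (Q * R) k'' i' * Q k'' j = R j i' := by
      have h4 := congrFun (congrFun h2 i') j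
      rw [Matrix.mul_apply] at h4
      simpa [Matrix.transpose_apply] using h4
    rw [h1]
    calc ∑ k'', H (e k'') (e i') * Q k'' j
        = ∑ k'', s * ((Q * R) k'' i' * Q k'' j) := by
          refine Finset.sum_congr rfl (fun k'' _ => ?_)
          rw [hent k'' i']; ring
      _ = s * ∑ k'', (Q * R) k'' i' * Q k'' j := by rw [Finset.mul_sum]
      _ = s * R j i' := by rw [h3]
  set P : ℝ := s * R j j with hPdef
  have hPpos : 0 < P := mul_pos hspos (hRpos j)
  -- master identity for qh
  have hqhmaster : ∀ c : Fin m,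
      qh c = (∑ i'', H c i'' * bh i'') - (if n ≤ (c:ℕ) then x c else 0) := by
    intro c
    by_cases hc : (c:ℕ) < n
    · have h1 : qh c = Q ⟨(c:ℕ), hc⟩ j := by rw [hqh, hpaddef]; exact dif_pos hc
      have h2 : ∑ i'', H c i'' * bh i'' = ∑ i', H c (e i') * b i' := hpad (H c) b
      have h3 : e ⟨(c:ℕ), hc⟩ = c := rfl
      rw [h1, hQcol ⟨(c:ℕ), hc⟩, h3, h2, if_neg (by omega)]
      simp
    · have h1 : qh c = 0 := by rw [hqh, hpaddef]; exact dif_neg hc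
      rw [h1, if_pos (by omega), hx]
      simp
  -- ρ in terms of bh and g
  have hρeq : ∀ i : Fin m, ρ i = m * bh i - g i := by
    intro i
    have hA : ∑ k', H k' i * (∑ i'', H k' i'' * bh i'') = m * bh i := by
      calc ∑ k', H k' i * (∑ i'', H k' i'' * bh i'')
          = ∑ k', ∑ i'', (H k' i * H k' i'') * bh i'' := by
            refine Finset.sum_congr rfl (fun k' _ => ?_)
            rw [Finset.mul_sum]
            exact Finset.sum_congr rfl (fun i'' _ => by ring)
        _ = ∑ i'', ∑ k', (H k' i * H k' i'') * bh i'' := Finset.sum_comm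
        _ = ∑ i'', (∑ k', H k' i * H k' i'') * bh i'' := by
            refine Finset.sum_congr rfl (fun i'' _ => ?_)
            rw [Finset.sum_mul]
        _ = ∑ i'', (if i = i'' then (m:ℝ) else 0) * bh i'' := by
            refine Finset.sum_congr rfl (fun i'' _ => ?_)
            rw [horthC i i'']
        _ = ∑ i'', (if i = i'' then (m:ℝ) * bh i'' else 0) := by
            refine Finset.sum_congr rfl (fun i'' _ => ?_)
            rw [ite_mul, zero_mul]
        _ = m * bh i := by rw [Finset.sum_ite_eq]; simp
    have hB : ∑ k', H k' i * (if n ≤ (k':ℕ) then x k' else 0) = g i := by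
      calc ∑ k', H k' i * (if n ≤ (k':ℕ) then x k' else 0)
          = ∑ k' : Fin m, (if n ≤ (k':ℕ) then x k' * H k' i else 0) := by
            refine Finset.sum_congr rfl (fun k' _ => ?_)
            rw [mul_ite, mul_zero, mul_comm]
        _ = ∑ a ∈ D, x a * H a i := by
            rw [hD, Finset.sum_filter]
        _ = g i := by rw [hg]
    calc ρ i = ∑ k', H k' i * qh k' := by rw [hρ]
      _ = ∑ k', (H k' i * (∑ i'', H k' i'' * bh i'')
            - H k' i * (if n ≤ (k':ℕ) then x k' else 0)) := by
          refine Finset.sum_congr rfl (fun k' _ => ?_)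
          rw [hqhmaster k', mul_sub]
      _ = (∑ k', H k' i * (∑ i'', H k' i'' * bh i''))
            - ∑ k', H k' i * (if n ≤ (k':ℕ) then x k' else 0) := Finset.sum_sub_distrib _ _
      _ = m * bh i - g i := by rw [hA, hB]
  -- bh and ρ beyond j
  have hbh0 : ∀ i : Fin m, (j:ℕ) < (i:ℕ) → bh i = 0 := by
    intro i hji
    have h0 : bh i = if hi : (i:ℕ) < n then b ⟨(i:ℕ), hi⟩ else 0 := rfl
    rw [h0]
    by_cases hc : (i:ℕ) < n
    · rw [dif_pos hc]; exact hb0 ⟨(i:ℕ), hc⟩ hji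
    · rw [dif_neg hc]
  have hρtail : ∀ i : Fin m, (j:ℕ) < (i:ℕ) → ρ i = - g i := by
    intro i hji
    rw [hρeq i, hbh0 i hji]
    ring
  -- ρ below j vanishes, at j equals P
  have hρlt : ∀ i : Fin m, (i:ℕ) < (j:ℕ) → ρ i = 0 := by
    intro i hij
    have hc : (i:ℕ) < n := lt_trans hij j.isLt
    have h3 : e ⟨(i:ℕ), hc⟩ = i := rfl
    have := hρcast ⟨(i:ℕ), hc⟩
    rw [h3] at this
    rw [this, hRtri j ⟨(i:ℕ), hc⟩ hij, mul_zero]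
  have hρj : ∀ i : Fin m, (i:ℕ) = (j:ℕ) → ρ i = P := by
    intro i hij
    have : i = e j := Fin.ext hij
    rw [this, hρcast j, hPdef]
  -- head / tail split
  set Tail : Finset (Fin m) := Finset.univ.filter (fun i : Fin m => (j:ℕ) < (i:ℕ)) with hTail
  set Head : Finset (Fin m) := Finset.univ.filter (fun i : Fin m => ¬ ((j:ℕ) < (i:ℕ))) with hHead
  have hsplitTH : ∀ f : Fin m → ℝ, ∑ i ∈ Tail, f i + ∑ i ∈ Head, f i = ∑ i, f i := by
    intro f
    rw [hTail, hHead]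
    exact Finset.sum_filter_add_sum_filter_not Finset.univ _ f
  have hejHead : e j ∈ Head := by
    rw [hHead, Finset.mem_filter]
    exact ⟨Finset.mem_univ _, lt_irrefl _⟩
  -- total sums against rows in D
  have htotal : ∀ a ∈ D, ∑ i, g i * H a i = m * x a := by
    intro a ha
    calc ∑ i, g i * H a i
        = ∑ i, ∑ a' ∈ D, (x a' * H a' i) * H a i := by
          refine Finset.sum_congr rfl (fun i _ => ?_)
          rw [hg, Finset.sum_mul]
      _ = ∑ a' ∈ D, ∑ i, (x a' * H a' i) * H a i := Finset.sum_comm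
      _ = ∑ a' ∈ D, x a' * (∑ i, H a' i * H a i) := by
          refine Finset.sum_congr rfl (fun a' _ => ?_)
          rw [Finset.mul_sum]
          exact Finset.sum_congr rfl (fun i _ => by ring)
      _ = ∑ a' ∈ D, (if a' = a then x a' * m else 0) := by
          refine Finset.sum_congr rfl (fun a' _ => ?_)
          rw [horthR a' a, mul_ite, mul_zero]
      _ = m * x a := by rw [Finset.sum_ite_eq' D a (fun a' => x a' * (m:ℝ)), if_pos ha, mul_comm]
  -- head sums against rows in D
  have hhead : ∀ a ∈ D, ∑ i ∈ Head, g i * H a i = m * x a - P * H a (e j) := by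
    intro a ha
    have hpt : ∀ i ∈ Head, g i * H a i
        = (m:ℝ) * (bh i * H a i) - (if i = e j then P * H a (e j) else 0) := by
      intro i hi
      have hle : ¬ ((j:ℕ) < (i:ℕ)) := (Finset.mem_filter.mp hi).2
      rcases Nat.lt_or_ge (i:ℕ) (j:ℕ) with hlt | hge
      · have h0 : ρ i = 0 := hρlt i hlt
        have h1 : g i = m * bh i := by
          have := hρeq i
          rw [h0] at this
          linarith
        rw [h1, if_neg (by intro hcon; rw [hcon] at hlt; exact lt_irrefl _ hlt)]
        ring
      · have hij : (i:ℕ) = (j:ℕ) := by omega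
        have hiej : i = e j := Fin.ext hij
        have h0 : ρ i = P := hρj i hij
        have h1 : g i = m * bh i - P := by
          have := hρeq i
          rw [h0] at this
          linarith
        rw [h1, if_pos hiej, hiej]
        ring
    calc ∑ i ∈ Head, g i * H a i
        = ∑ i ∈ Head, ((m:ℝ) * (bh i * H a i) - (if i = e j then P * H a (e j) else 0)) :=
          Finset.sum_congr rfl hpt
      _ = (m:ℝ) * (∑ i ∈ Head, bh i * H a i)
            - ∑ i ∈ Head, (if i = e j then P * H a (e j) else 0) := by
          rw [Finset.sum_sub_distrib, Finset.mul_sum]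
      _ = m * x a - P * H a (e j) := by
          have h2 : ∑ i ∈ Head, (if i = e j then P * H a (e j) else 0) = P * H a (e j) := by
            rw [Finset.sum_ite_eq' Head (e j) (fun _ => P * H a (e j)), if_pos hejHead]
          have h3 : ∑ i ∈ Head, bh i * H a i = x a := by
            have h4 : ∑ i ∈ Head, bh i * H a i = ∑ i, bh i * H a i := by
              apply Finset.sum_subset (Finset.filter_subset _ _)
              intro i _ hnot
              have hji : (j:ℕ) < (i:ℕ) := by
                by_contra hcon
                exact hnot (Finset.mem_filter.mpr ⟨Finset.mem_univ _, hcon⟩)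
              rw [hbh0 i hji, zero_mul]
            rw [h4, hx]
            exact Finset.sum_congr rfl (fun i _ => by ring)
          rw [h2, h3]
  -- the tail equation
  have htail : ∀ a ∈ D, ∑ i ∈ Tail, g i * H a i = P * H a (e j) := by
    intro a ha
    have := hsplitTH (fun i => g i * H a i)
    rw [htotal a ha] at this
    rw [hhead a ha] at this
    linarith
  -- norm identities
  have hinv : ∀ c : Fin m, ∑ i, H c i * ρ i = m * qh c := by
    intro c
    calc ∑ i, H c i * ρ i
        = ∑ i, ∑ k', (H c i * H k' i) * qh k' := by
          refine Finset.sum_congr rfl (fun i _ => ?_)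
          rw [hρ, Finset.mul_sum]
          exact Finset.sum_congr rfl (fun k' _ => by ring)
      _ = ∑ k', ∑ i, (H c i * H k' i) * qh k' := Finset.sum_comm
      _ = ∑ k', (∑ i, H c i * H k' i) * qh k' := by
          refine Finset.sum_congr rfl (fun k' _ => ?_)
          rw [Finset.sum_mul]
      _ = ∑ k' : Fin m, (if c = k' then (m:ℝ) * qh k' else 0) := by
          refine Finset.sum_congr rfl (fun k' _ => ?_)
          rw [horthR c k', ite_mul, zero_mul]
      _ = m * qh c := by rw [Finset.sum_ite_eq]; simp
  have hqhnorm : ∑ k', qh k' * qh k' = 1 := by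
    have h1 : ∑ k' : Fin m, qh k' * qh k' = ∑ k'' : Fin n, qh (e k'') * Q k'' j :=
      hpad qh (fun k'' => Q k'' j)
    have h2 : ∀ k'' : Fin n, qh (e k'') = Q k'' j := by
      intro k''
      have h0 : qh (e k'') = if hi : ((e k'' : Fin m):ℕ) < n then Q ⟨((e k''):ℕ), hi⟩ j else 0 :=
        rfl
      rw [h0, dif_pos (show ((e k'' : Fin m):ℕ) < n from k''.isLt)]
      rfl
    have h3 : ∑ k'' : Fin n, Q k'' j * Q k'' j = 1 := by
      have h4 := congrFun (congrFun hQtQ j) j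
      rw [Matrix.mul_apply] at h4
      simp only [Matrix.transpose_apply, Matrix.one_apply_eq] at h4
      exact h4
    rw [h1]
    rw [Finset.sum_congr rfl (fun k'' _ => by rw [h2 k''])]
    exact h3
  have hρnorm : ∑ i, ρ i * ρ i = m := by
    calc ∑ i, ρ i * ρ i
        = ∑ i, ∑ k', (H k' i * qh k') * ρ i := by
          refine Finset.sum_congr rfl (fun i _ => ?_)
          rw [hρ, Finset.sum_mul]
      _ = ∑ k', ∑ i, (H k' i * qh k') * ρ i := Finset.sum_comm
      _ = ∑ k', qh k' * (∑ i, H k' i * ρ i) := by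
          refine Finset.sum_congr rfl (fun k' _ => ?_)
          rw [Finset.mul_sum]
          exact Finset.sum_congr rfl (fun i _ => by ring)
      _ = ∑ k', qh k' * (m * qh k') := by
          refine Finset.sum_congr rfl (fun k' _ => ?_)
          rw [hinv k']
      _ = m * ∑ k', qh k' * qh k' := by
          rw [Finset.mul_sum]
          exact Finset.sum_congr rfl (fun k' _ => by ring)
      _ = m := by rw [hqhnorm, mul_one]
  -- P ≤ s
  have hPle : P ≤ s := by
    have h1 : ∑ i ∈ Head, ρ i * ρ i ≤ ∑ i, ρ i * ρ i := by
      have := hsplitTH (fun i => ρ i * ρ i)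
      have h2 : 0 ≤ ∑ i ∈ Tail, ρ i * ρ i :=
        Finset.sum_nonneg (fun i _ => mul_self_nonneg _)
      linarith
    have h3 : P * P ≤ ∑ i ∈ Head, ρ i * ρ i := by
      have h4 : ρ (e j) * ρ (e j) = P * P := by
        rw [hρj (e j) rfl]
      rw [← h4]
      exact Finset.single_le_sum (fun i _ => mul_self_nonneg (ρ i)) hejHead
    rw [hρnorm] at h1
    nlinarith [hspos]
  -- cardinality of D
  have hDcard : D.card ≤ 3 := by
    have h1 : D.card = ((Finset.univ : Finset (Fin (m - n)))).card := by
      apply Finset.card_bij (fun (a : Fin m) (ha : a ∈ D) =>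
        (⟨(a:ℕ) - n, by
          have h2 : n ≤ (a:ℕ) := (Finset.mem_filter.mp ha).2
          have h3 : (a:ℕ) < m := a.isLt
          omega⟩ : Fin (m - n)))
      · intro a ha
        exact Finset.mem_univ _
      · intro a1 ha1 a2 ha2 heqq
        have h2 : n ≤ (a1:ℕ) := (Finset.mem_filter.mp ha1).2
        have h3 : n ≤ (a2:ℕ) := (Finset.mem_filter.mp ha2).2
        have h4 := congrArg Fin.val heqq
        simp only [] at h4
        apply Fin.ext
        omega
      · intro t _
        have h2 : n + (t:ℕ) < m := by
          have := t.isLt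
          omega
        refine ⟨⟨n + (t:ℕ), h2⟩, ?_, ?_⟩
        · exact Finset.mem_filter.mpr ⟨Finset.mem_univ _, Nat.le_add_right n (t:ℕ)⟩
        · apply Fin.ext
          simp
      
    rw [h1, Finset.card_univ, Fintype.card_fin]
    omega
  -- the ℓ¹ bound on the tail, via the combinatorial key lemma
  have hgsum : ∑ i ∈ Tail, |g i| ≤ 3 * P := by
    apply key13 Tail D (fun a i => H a i) (fun a => H a (e j))
      (fun a _ i _ => hH a i) (fun a _ => hH a (e j)) x P hPpos g
      (fun i _ => by rw [hg]) htail hDcard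
  -- final assembly
  have hqhek : qh (e k) = Q k j := by
    have h0 : qh (e k) = if hi : ((e k : Fin m):ℕ) < n then Q ⟨((e k):ℕ), hi⟩ j else 0 := rfl
    rw [h0, dif_pos (show ((e k : Fin m):ℕ) < n from k.isLt)]
    rfl
  have hheadF : ∑ i ∈ Head, H (e k) i * ρ i = H (e k) (e j) * P := by
    have hpt : ∀ i ∈ Head, H (e k) i * ρ i = if i = e j then H (e k) (e j) * P else 0 := by
      intro i hi
      have hle : ¬ ((j:ℕ) < (i:ℕ)) := (Finset.mem_filter.mp hi).2
      rcases Nat.lt_or_ge (i:ℕ) (j:ℕ) with hlt | hge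
      · rw [hρlt i hlt, mul_zero,
          if_neg (by intro hcon; rw [hcon] at hlt; exact lt_irrefl _ hlt)]
      · have hij : (i:ℕ) = (j:ℕ) := by omega
        have hiej : i = e j := Fin.ext hij
        rw [hρj i hij, if_pos hiej, hiej]
    rw [Finset.sum_congr rfl hpt,
      Finset.sum_ite_eq' Head (e j) (fun _ => H (e k) (e j) * P), if_pos hejHead]
  have hfinal : (m:ℝ) * Q k j = ∑ i ∈ Tail, H (e k) i * (- g i) + H (e k) (e j) * P := by
    have h1 := hinv (e k)
    rw [hqhek] at h1
    have h2 := hsplitTH (fun i => H (e k) i * ρ i)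
    have h3 : ∑ i ∈ Tail, H (e k) i * ρ i = ∑ i ∈ Tail, H (e k) i * (- g i) := by
      refine Finset.sum_congr rfl (fun i hi => ?_)
      rw [hρtail i (Finset.mem_filter.mp hi).2]
    rw [hheadF, h3] at h2
    rw [← h1, ← h2]
  have habs : (m:ℝ) * |Q k j| ≤ 4 * P := by
    have h1 : |(m:ℝ) * Q k j| = (m:ℝ) * |Q k j| := by
      rw [abs_mul, abs_of_pos hmpos]
    rw [← h1, hfinal]
    calc |∑ i ∈ Tail, H (e k) i * (- g i) + H (e k) (e j) * P|
        ≤ |∑ i ∈ Tail, H (e k) i * (- g i)| + |H (e k) (e j) * P| := abs_add_le _ _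
      _ ≤ (∑ i ∈ Tail, |H (e k) i * (- g i)|) + |H (e k) (e j) * P| := by
          have := Finset.abs_sum_le_sum_abs (fun i => H (e k) i * (- g i)) Tail
          linarith
      _ = (∑ i ∈ Tail, |g i|) + P := by
          rw [abs_mul, pm_abs (hH (e k) (e j)), abs_of_pos hPpos, one_mul]
          congr 1
          refine Finset.sum_congr rfl (fun i _ => ?_)
          rw [abs_mul, pm_abs (hH (e k) i), abs_neg, one_mul]
      _ ≤ 3 * P + P := by linarith
      _ = 4 * P := by ring
  have hQb : |Q k j| * m ≤ 4 * s := by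
    calc |Q k j| * m = m * |Q k j| := by ring
      _ ≤ 4 * P := habs
      _ ≤ 4 * s := by linarith
  have hfin1 : |Q k j| ≤ 4 / s := by
    rw [le_div_iff₀ hspos]
    nlinarith [hQb, hssq, hspos, abs_nonneg (Q k j)]
  have hsn : Real.sqrt n ≤ s := by rw [hs]; exact Real.sqrt_le_sqrt (by exact_mod_cast hnm)
  have hsnpos : 0 < Real.sqrt n := Real.sqrt_pos.mpr hnpos
  calc |Q k j| ≤ 4 / s := hfin1
    _ ≤ 4 / Real.sqrt n := by
        rw [div_le_div_iff₀ hspos hsnpos]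
        nlinarith [hsn]
end
end

section
/- Let k ≥ 1 and n = 2^{k−1}. Index the rows of an n×n matrix A by the vectors v ∈ {−1,1}^{k−1}, and let the row a_v have first coordinate 1/√k, coordinates 2 through k equal to v_1/√k, …, v_{k−1}/√k, and all remaining coordinates 0 (so each row has unit Euclidean norm). Then for every x ∈ {−1,1}^n one has ‖Ax‖_∞ = √k, and consequently β(A) = √k = √(log₂(n) + 1). -/
open Finset

noncomputable section
open scoped Classical

/-- The tree/subcube construction: for `n = 2^{k-1}` with rows indexed (via a bijection `e`)
by sign vectors `v ∈ {±1}^{k-1}`, where row `v` is `(1/√k, v₁/√k, …, v_{k-1}/√k, 0, …, 0)`,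
every hypercube vertex satisfies `‖Ax‖_∞ = √k`, hence `β(A) = √k = √(log₂ n + 1)`. -/
theorem stmt18 (k : ℕ) (hk : 1 ≤ k) (n : ℕ) (hn : n = 2 ^ (k - 1))
    (e : Fin n ≃ (Fin (k - 1) → Bool))
    (A : Matrix (Fin n) (Fin n) ℝ)
    (hA : ∀ (r j : Fin n),
      ((j : ℕ) = 0 → A r j = 1 / Real.sqrt k) ∧
      (∀ (h1 : 1 ≤ (j : ℕ)) (h2 : (j : ℕ) ≤ k - 1),
        A r j = sgn (e r ⟨(j : ℕ) - 1, by omega⟩) / Real.sqrt k) ∧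
      (k ≤ (j : ℕ) → A r j = 0)) :
    (∀ x ∈ cube n, ‖A.mulVec x‖ = Real.sqrt k) ∧
    badBeta A = Real.sqrt k ∧
    badBeta A = Real.sqrt (Real.logb 2 n + 1) := by
  obtain ⟨m, rfl⟩ : ∃ m, k = m + 1 := ⟨k - 1, by omega⟩
  simp only [Nat.add_sub_cancel] at hn
  have hkn : m + 1 ≤ n := by
    have := Nat.lt_two_pow_self (n := m)
    omega
  set c : ℝ := ((m + 1 : ℕ) : ℝ) with hc
  set s : ℝ := Real.sqrt c with hsdef
  have hc1 : (1 : ℝ) + m = c := by push_cast [hc]; ring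
  have hcpos : 0 < c := by positivity
  have hs : 0 < s := Real.sqrt_pos.mpr hcpos
  have hdiv : c / s = s := Real.div_sqrt
  have hsgn_abs : ∀ a : Bool, |sgn a| = 1 := by intro a; cases a <;> simp [sgn]
  have hsgn_mul : ∀ a b : Bool, sgn (a == b) * sgn b = sgn a := by
    intro a b; cases a <;> cases b <;> simp [sgn]
  -- the embedding of the first m+1 coordinates
  set g : Fin (m + 1) → Fin n := fun j => ⟨j.1, lt_of_lt_of_le j.isLt hkn⟩ with hg
  have h1 : ∀ x ∈ cube n, ‖A.mulVec x‖ = s := by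
    intro x hx
    obtain ⟨ε, -, rfl⟩ := Finset.mem_image.mp hx
    have key : ∀ r, A.mulVec (fun i => sgn (ε i)) r
        = (sgn (ε (g 0)) + ∑ i : Fin m, sgn (e r i) * sgn (ε (g i.succ))) / s := by
      intro r
      have step1 : A.mulVec (fun i => sgn (ε i)) r
          = ∑ j : Fin (m + 1), A r (g j) * sgn (ε (g j)) := by
        have hinj : ∀ a ∈ (Finset.univ : Finset (Fin (m + 1))), ∀ b ∈ Finset.univ,
            g a = g b → a = b := by
          intro a _ b _ hab
          simpa [hg, Fin.ext_iff] using hab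
        have himg : (∑ j ∈ Finset.univ.image g, A r j * sgn (ε j))
            = ∑ j : Fin (m + 1), A r (g j) * sgn (ε (g j)) := Finset.sum_image hinj
        rw [Matrix.mulVec, dotProduct, ← himg]
        symm
        apply Finset.sum_subset (Finset.subset_univ _)
        intro j _ hj
        have hjk : m + 1 ≤ (j : ℕ) := by
          by_contra h
          exact hj (Finset.mem_image.mpr ⟨⟨j.1, by omega⟩, Finset.mem_univ _, Fin.ext rfl⟩)
        rw [(hA r j).2.2 hjk, zero_mul]
      have hrow0 : A r (g 0) = 1 / s := (hA r (g 0)).1 rfl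
      have hrow : ∀ i : Fin m, A r (g i.succ) = sgn (e r i) / s := by
        intro i
        have h2 : (g i.succ : ℕ) ≤ m + 1 - 1 := by
          show i.1 + 1 ≤ m + 1 - 1
          omega
        have h := (hA r (g i.succ)).2.1 (by exact Nat.le_add_left 1 i.1) h2
        rw [h]
        congr 3
      rw [step1, Fin.sum_univ_succ, hrow0]
      rw [Finset.sum_congr rfl (fun i _ => by rw [hrow i])]
      rw [add_div, Finset.sum_div]
      congr 1
      · ring
      · exact Finset.sum_congr rfl (fun i _ => by ring)
    have hbound : ∀ r, |A.mulVec (fun i => sgn (ε i)) r| ≤ s := by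
      intro r
      rw [key r, abs_div, abs_of_pos hs]
      rw [div_le_iff₀ hs, Real.mul_self_sqrt hcpos.le]
      calc |sgn (ε (g 0)) + ∑ i : Fin m, sgn (e r i) * sgn (ε (g i.succ))|
          ≤ |sgn (ε (g 0))| + |∑ i : Fin m, sgn (e r i) * sgn (ε (g i.succ))| := abs_add_le _ _
        _ ≤ 1 + ∑ i : Fin m, |sgn (e r i) * sgn (ε (g i.succ))| := by
            rw [hsgn_abs]
            exact add_le_add_right (Finset.abs_sum_le_sum_abs _ _) 1
        _ = 1 + m := by
            simp only [abs_mul, hsgn_abs, one_mul]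
            simp
        _ = c := hc1
    -- the attaining row
    set b : Fin (m + 1 - 1) → Bool := fun i => (ε (g 0) == ε (g (Fin.succ i))) with hb
    set r₀ : Fin n := e.symm b with hr0
    have hattain : |A.mulVec (fun i => sgn (ε i)) r₀| = s := by
      rw [key r₀]
      have : ∀ i : Fin m, sgn (e r₀ i) * sgn (ε (g i.succ)) = sgn (ε (g 0)) := by
        intro i
        rw [hr0, Equiv.apply_symm_apply]
        exact hsgn_mul _ _
      rw [Finset.sum_congr rfl (fun i _ => this i), Finset.sum_const, Finset.card_univ]
      simp only [Fintype.card_fin, nsmul_eq_mul]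
      have : sgn (ε (g 0)) + (m : ℝ) * sgn (ε (g 0)) = (1 + m) * sgn (ε (g 0)) := by ring
      rw [this, hc1, abs_div, abs_mul, hsgn_abs, mul_one, abs_of_pos hcpos,
        abs_of_pos hs, hdiv]
    apply le_antisymm
    · exact (pi_norm_le_iff_of_nonneg (Real.sqrt_nonneg _)).mpr
        (fun r => by rw [Real.norm_eq_abs]; exact hbound r)
    · calc s = |A.mulVec (fun i => sgn (ε i)) r₀| := hattain.symm
        _ = ‖A.mulVec (fun i => sgn (ε i)) r₀‖ := (Real.norm_eq_abs _).symm
        _ ≤ ‖A.mulVec (fun i => sgn (ε i))‖ := norm_le_pi_norm _ r₀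
  have hcard : (cube n).card = 2 ^ n := by
    rw [cube, Finset.card_image_of_injective _ ?_, Finset.card_univ]
    · simp
    · intro a b hab
      funext i
      have h := congrFun hab i
      simp only [sgn] at h
      cases ha : a i <;> cases hb : b i <;> rw [ha, hb] at h <;>
        first | rfl | norm_num at h
  have h2 : badBeta A = s := by
    rw [badBeta, Finset.sum_congr rfl h1, Finset.sum_const, hcard, nsmul_eq_mul]
    push_cast
    rw [← mul_assoc, inv_mul_cancel₀ (by positivity), one_mul]
  refine ⟨h1, h2, ?_⟩
  rw [h2]
  rw [hn]
  push_cast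
  rw [show Real.logb 2 ((2:ℝ) ^ m) = m from by
    simp [Real.logb, Real.log_pow, mul_div_assoc,
      div_self (ne_of_gt (Real.log_pos (by norm_num : (1:ℝ) < 2)))]]
  rw [hsdef, hc]
  push_cast
  ring_nf
end
end
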